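/- arXiv:2511.05125 — 3 statements merged into one kernel-verified Lean document; each statement's English description precedes it below -/
import Mathlib

section
/- Lieb's concavity in the form used in the paper: fix a dimension D ≥ 1 and s ∈ [0,1]. For all positive semidefinite complex D×D matrices A, B, C, E and every λ ∈ [0,1], one has Tr((λA + (1−λ)C)^s (λB + (1−λ)E)^{1−s}) ≥ λ·Tr(A^s B^{1−s}) + (1−λ)·Tr(C^s E^{1−s}); that is, the map (A,B) ↦ Tr(A^s B^{1−s}) is jointly concave on pairs of positive semidefinite matrices. -/
open scoped ComplexOrder

open Matrix

/-- Fractional power of a Hermitian complex matrix, via the spectral decomposition: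
apply `x \u21a6 x^t` to the eigenvalues, with the convention `0^0 = 0` (so `A^0` is the
orthogonal projection onto the support of `A`).  Junk value `0` for non-Hermitian input. -/
noncomputable def matPow {n : Type*} [Fintype n] [DecidableEq n]
    (A : Matrix n n ℂ) (t : ℝ) : Matrix n n ℂ :=
  if hA : A.IsHermitian then
    (hA.eigenvectorUnitary : Matrix n n ℂ) *
      Matrix.diagonal (fun i =>
        (Complex.ofReal (if hA.eigenvalues i = 0 then (0 : ℝ) else hA.eigenvalues i ^ t))) *
      (star (hA.eigenvectorUnitary : Matrix n n ℂ))
  else 0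

namespace LiebAux
open Complex


noncomputable def hfun (t a b : ℝ) : ℝ := t * a * b / (a + t * b)

lemma hfun_nonneg {t a b : ℝ} (ht : 0 ≤ t) (ha : 0 ≤ a) (hb : 0 ≤ b) : 0 ≤ hfun t a b := by
  unfold hfun; positivity

lemma hfun_le {a b t : ℝ} (ha : 0 ≤ a) (hb : 0 ≤ b) (ht : 0 < t) (w y : ℂ) :
    hfun t a b * ‖w‖ ^ 2 ≤ a * ‖y‖ ^ 2 + t * b * ‖w - y‖ ^ 2 := by
  rcases eq_or_lt_of_le ha with rfl | ha'
  · simp only [hfun, mul_zero, zero_mul, zero_div, zero_add]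
    positivity
  rcases eq_or_lt_of_le hb with rfl | hb'
  · simp only [hfun, mul_zero, zero_div, zero_mul, add_zero]
    positivity
  have hd : 0 < a + t * b := by positivity
  rw [hfun, div_mul_eq_mul_div, div_le_iff₀ hd]
  have hr : ‖w‖ ≤ ‖y‖ + ‖w - y‖ := by
    calc ‖w‖ = ‖y + (w - y)‖ := by ring_nf
    _ ≤ ‖y‖ + ‖w - y‖ := norm_add_le _ _
  have h1 : ‖w‖ ^ 2 ≤ (‖y‖ + ‖w - y‖) ^ 2 := by
    have := norm_nonneg w
    nlinarith
  nlinarith [sq_nonneg (a * ‖y‖ - t * b * ‖w - y‖), norm_nonneg y, norm_nonneg (w - y),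
    mul_pos ht hb', mul_pos ha' (mul_pos ht hb')]

lemma hfun_min {a b t : ℝ} (ha : 0 ≤ a) (hb : 0 ≤ b) (ht : 0 < t) (w : ℂ) :
    a * ‖((t * b / (a + t * b) : ℝ) : ℂ) * w‖ ^ 2
      + t * b * ‖w - ((t * b / (a + t * b) : ℝ) : ℂ) * w‖ ^ 2
      = hfun t a b * ‖w‖ ^ 2 := by
  set c : ℝ := t * b / (a + t * b) with hc
  have h1 : ‖(c : ℂ) * w‖ ^ 2 = c ^ 2 * ‖w‖ ^ 2 := by
    rw [norm_mul, Complex.norm_real, mul_pow, Real.norm_eq_abs, _root_.sq_abs]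
  have h2 : ‖w - (c : ℂ) * w‖ ^ 2 = (1 - c) ^ 2 * ‖w‖ ^ 2 := by
    have : w - (c : ℂ) * w = ((1 - c : ℝ) : ℂ) * w := by push_cast; ring
    rw [this, norm_mul, Complex.norm_real, mul_pow, Real.norm_eq_abs, _root_.sq_abs]
  rw [h1, h2]
  have key : a * c ^ 2 + t * b * (1 - c) ^ 2 = hfun t a b := by
    rcases eq_or_lt_of_le ha with rfl | ha'
    · rcases eq_or_lt_of_le hb with rfl | hb'
      · simp [hc, hfun]
      · have htb : t * b ≠ 0 := by positivity
        rw [hc, hfun]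
        field_simp
        ring
    · have hd : a + t * b ≠ 0 := by positivity
      rw [hc, hfun]
      field_simp
      ring
  rw [← key]; ring



variable {n : Type*} [Fintype n] [DecidableEq n]

lemma mul_star_self_eq (w : ℂ) : w * star w = ((‖w‖^2 : ℝ) : ℂ) := by
  rw [Complex.star_def, Complex.mul_conj, Complex.normSq_eq_norm_sq]

lemma re_trace_diag_conj (d g : n → ℝ) (W : Matrix n n ℂ) :
    (Matrix.trace (Matrix.diagonal (fun i => (d i : ℂ)) * W *
      Matrix.diagonal (fun j => (g j : ℂ)) * Wᴴ)).re
      = ∑ i, ∑ j, d i * g j * ‖W i j‖ ^ 2 := by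
  have h : ∀ i, (Matrix.diagonal (fun i => (d i : ℂ)) * W *
      Matrix.diagonal (fun j => (g j : ℂ)) * Wᴴ) i i
      = ∑ j, ((d i * g j * ‖W i j‖ ^ 2 : ℝ) : ℂ) := by
    intro i
    rw [Matrix.mul_apply]
    refine Finset.sum_congr rfl fun j _ => ?_
    rw [Matrix.mul_diagonal, Matrix.diagonal_mul, Matrix.conjTranspose_apply]
    have := mul_star_self_eq (W i j)
    push_cast at this ⊢
    linear_combination ((d i : ℂ) * (g j)) * this
  simp only [Matrix.trace, Matrix.diag_apply, h, ← Complex.ofReal_sum, Complex.ofReal_re]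

noncomputable def gp (x t : ℝ) : ℝ := if x = 0 then 0 else x ^ t


lemma qs_eq (A B : Matrix n n ℂ) (hA : A.IsHermitian) (hB : B.IsHermitian) (s r : ℝ) :
    (Matrix.trace (matPow A s * matPow B r)).re
      = ∑ i, ∑ j, gp (hA.eigenvalues i) s * gp (hB.eigenvalues j) r *
          ‖(star (hA.eigenvectorUnitary : Matrix n n ℂ) *
            (hB.eigenvectorUnitary : Matrix n n ℂ)) i j‖ ^ 2 := by
  set U : Matrix n n ℂ := (hA.eigenvectorUnitary : Matrix n n ℂ) with hUdef
  set V : Matrix n n ℂ := (hB.eigenvectorUnitary : Matrix n n ℂ) with hVdef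
  set W : Matrix n n ℂ := star U * V with hWdef
  set Df : Matrix n n ℂ := Matrix.diagonal (fun i => ((gp (hA.eigenvalues i) s : ℝ) : ℂ)) with hDf
  set Dg : Matrix n n ℂ := Matrix.diagonal (fun j => ((gp (hB.eigenvalues j) r : ℝ) : ℂ)) with hDg
  have hmp : matPow A s * matPow B r = U * (Df * (star U * (V * (Dg * star V)))) := by
    rw [matPow, dif_pos hA, matPow, dif_pos hB]
    simp only [Matrix.mul_assoc, hDf, hDg, gp]
    rfl
  have htr : Matrix.trace (matPow A s * matPow B r)
      = Matrix.trace (Df * W * Dg * Wᴴ) := by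
    rw [hmp, Matrix.trace_mul_comm]
    congr 1
    simp only [hWdef, Matrix.star_eq_conjTranspose, Matrix.conjTranspose_mul,
      Matrix.conjTranspose_conjTranspose, Matrix.mul_assoc]
  rw [htr]
  have := re_trace_diag_conj (fun i => gp (hA.eigenvalues i) s)
    (fun j => gp (hB.eigenvalues j) r) W
  exact this




noncomputable def qf (A B : Matrix n n ℂ) (t : ℝ) (X : Matrix n n ℂ) : ℝ :=
  (Matrix.trace (Xᴴ * A * X)).re + t * (Matrix.trace ((1 - X)ᴴ * (1 - X) * B)).re

lemma re_trace_form1 (d : n → ℝ) (Y : Matrix n n ℂ) :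
    (Matrix.trace (Yᴴ * Matrix.diagonal (fun i => (d i : ℂ)) * Y)).re
      = ∑ i, ∑ j, d i * ‖Y i j‖ ^ 2 := by
  have h : ∀ j, (Yᴴ * Matrix.diagonal (fun i => (d i : ℂ)) * Y) j j
      = ∑ i, ((d i * ‖Y i j‖ ^ 2 : ℝ) : ℂ) := by
    intro j
    rw [Matrix.mul_apply]
    refine Finset.sum_congr rfl fun i _ => ?_
    rw [Matrix.mul_diagonal, Matrix.conjTranspose_apply]
    have h2 : Y i j * star (Y i j) = ((‖Y i j‖ ^ 2 : ℝ) : ℂ) := by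
      rw [Complex.star_def, Complex.mul_conj, Complex.normSq_eq_norm_sq]
    push_cast at h2 ⊢
    linear_combination (d i : ℂ) * h2
  rw [Matrix.trace]
  simp only [Matrix.diag_apply, h, ← Complex.ofReal_sum, Complex.ofReal_re]
  exact Finset.sum_comm

lemma re_trace_form2 (g : n → ℝ) (Z : Matrix n n ℂ) :
    (Matrix.trace (Zᴴ * Z * Matrix.diagonal (fun j => (g j : ℂ)))).re
      = ∑ i, ∑ j, g j * ‖Z i j‖ ^ 2 := by
  have h : ∀ j, (Zᴴ * Z * Matrix.diagonal (fun j => (g j : ℂ))) j j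
      = ∑ i, ((g j * ‖Z i j‖ ^ 2 : ℝ) : ℂ) := by
    intro j
    rw [Matrix.mul_diagonal, Matrix.mul_apply, Finset.sum_mul]
    refine Finset.sum_congr rfl fun i _ => ?_
    rw [Matrix.conjTranspose_apply]
    have h2 : Z i j * star (Z i j) = ((‖Z i j‖ ^ 2 : ℝ) : ℂ) := by
      rw [Complex.star_def, Complex.mul_conj, Complex.normSq_eq_norm_sq]
    push_cast at h2 ⊢
    linear_combination (g j : ℂ) * h2
  rw [Matrix.trace]
  simp only [Matrix.diag_apply, h, ← Complex.ofReal_sum, Complex.ofReal_re]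
  exact Finset.sum_comm


lemma spectral (A : Matrix n n ℂ) (hA : A.IsHermitian) :
    A = (hA.eigenvectorUnitary : Matrix n n ℂ) *
      Matrix.diagonal (fun i => ((hA.eigenvalues i : ℝ) : ℂ)) *
      (star (hA.eigenvectorUnitary : Matrix n n ℂ)) := by
  have := hA.spectral_theorem
  rw [Unitary.conjStarAlgAut_apply] at this
  exact this

lemma qf_expand (A B : Matrix n n ℂ) (hA : A.IsHermitian) (hB : B.IsHermitian)
    (t : ℝ) (X : Matrix n n ℂ) :
    qf A B t X = ∑ i, ∑ j,
      (hA.eigenvalues i *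
          ‖((hA.eigenvectorUnitary : Matrix n n ℂ)ᴴ * X * (hB.eigenvectorUnitary : Matrix n n ℂ)) i j‖ ^ 2
        + t * hB.eigenvalues j *
          ‖((hA.eigenvectorUnitary : Matrix n n ℂ)ᴴ * (1 - X) * (hB.eigenvectorUnitary : Matrix n n ℂ)) i j‖ ^ 2) := by
  set U : Matrix n n ℂ := (hA.eigenvectorUnitary : Matrix n n ℂ) with hUdef
  set V : Matrix n n ℂ := (hB.eigenvectorUnitary : Matrix n n ℂ) with hVdef
  have hU1 : U * Uᴴ = 1 := by
    rw [← Matrix.star_eq_conjTranspose]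
    exact Matrix.mem_unitaryGroup_iff.mp (hA.eigenvectorUnitary).2
  have hV1 : V * Vᴴ = 1 := by
    rw [← Matrix.star_eq_conjTranspose]
    exact Matrix.mem_unitaryGroup_iff.mp (hB.eigenvectorUnitary).2
  set Y : Matrix n n ℂ := Uᴴ * X * V with hYdef
  set Z : Matrix n n ℂ := Uᴴ * (1 - X) * V with hZdef
  have h1 : Matrix.trace (Xᴴ * A * X)
      = Matrix.trace (Yᴴ * Matrix.diagonal (fun i => ((hA.eigenvalues i : ℝ) : ℂ)) * Y) := by
    conv_lhs => rw [spectral A hA]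
    have : Yᴴ * Matrix.diagonal (fun i => ((hA.eigenvalues i : ℝ) : ℂ)) * Y
        = Vᴴ * (Xᴴ * (U * Matrix.diagonal (fun i => ((hA.eigenvalues i : ℝ) : ℂ)) * star U) * X) * V := by
      simp only [hYdef, Matrix.conjTranspose_mul, Matrix.conjTranspose_conjTranspose,
        Matrix.star_eq_conjTranspose, Matrix.mul_assoc]
    rw [this]
    conv_rhs => rw [Matrix.trace_mul_cycle, hV1, Matrix.one_mul]
  have h2 : Matrix.trace ((1 - X)ᴴ * (1 - X) * B)
      = Matrix.trace (Zᴴ * Z * Matrix.diagonal (fun j => ((hB.eigenvalues j : ℝ) : ℂ))) := by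
    conv_lhs => rw [spectral B hB]
    have hz : Zᴴ * Z = Vᴴ * ((1 - X)ᴴ * (1 - X)) * V := by
      have : Zᴴ = Vᴴ * (1 - X)ᴴ * U := by
        simp only [hZdef, Matrix.conjTranspose_mul, Matrix.conjTranspose_conjTranspose,
          Matrix.mul_assoc]
      rw [this, hZdef]
      calc Vᴴ * (1 - X)ᴴ * U * (Uᴴ * (1 - X) * V)
          = Vᴴ * (1 - X)ᴴ * (U * Uᴴ) * ((1 - X) * V) := by
            simp only [Matrix.mul_assoc]
        _ = Vᴴ * ((1 - X)ᴴ * (1 - X)) * V := by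
            rw [hU1, Matrix.mul_one]
            simp only [Matrix.mul_assoc]
    rw [hz]
    rw [Matrix.trace_mul_comm]
    conv_rhs => rw [Matrix.trace_mul_cycle, Matrix.trace_mul_cycle]
    rw [hVdef]
    simp only [Matrix.star_eq_conjTranspose, Matrix.mul_assoc]
  rw [qf, h1, h2, re_trace_form1, re_trace_form2, Finset.mul_sum, ← Finset.sum_add_distrib]
  refine Finset.sum_congr rfl fun i _ => ?_
  rw [Finset.mul_sum, ← Finset.sum_add_distrib]
  refine Finset.sum_congr rfl fun j _ => ?_
  ring


noncomputable def Wm {n : Type*} [Fintype n] [DecidableEq n] {A B : Matrix n n ℂ}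
    (hA : A.IsHermitian) (hB : B.IsHermitian) : Matrix n n ℂ :=
  (hA.eigenvectorUnitary : Matrix n n ℂ)ᴴ * (hB.eigenvectorUnitary : Matrix n n ℂ)

noncomputable def Fs {n : Type*} [Fintype n] [DecidableEq n] {A B : Matrix n n ℂ}
    (hA : A.IsHermitian) (hB : B.IsHermitian) (t : ℝ) : ℝ :=
  ∑ i, ∑ j, hfun t (hA.eigenvalues i) (hB.eigenvalues j) * ‖Wm hA hB i j‖ ^ 2

lemma one_sub_expand {A B : Matrix n n ℂ} (hA : A.IsHermitian) (hB : B.IsHermitian)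
    (X : Matrix n n ℂ) :
    (hA.eigenvectorUnitary : Matrix n n ℂ)ᴴ * (1 - X) * (hB.eigenvectorUnitary : Matrix n n ℂ)
      = Wm hA hB - (hA.eigenvectorUnitary : Matrix n n ℂ)ᴴ * X * (hB.eigenvectorUnitary : Matrix n n ℂ) := by
  rw [Wm, Matrix.mul_sub, Matrix.mul_one, Matrix.sub_mul]

lemma Fs_le_qf {A B : Matrix n n ℂ} (hA : A.PosSemidef) (hB : B.PosSemidef)
    {t : ℝ} (ht : 0 < t) (X : Matrix n n ℂ) :
    Fs hA.1 hB.1 t ≤ qf A B t X := by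
  rw [qf_expand A B hA.1 hB.1 t X, Fs]
  refine Finset.sum_le_sum fun i _ => Finset.sum_le_sum fun j _ => ?_
  rw [one_sub_expand hA.1 hB.1 X, Matrix.sub_apply]
  exact hfun_le (hA.eigenvalues_nonneg i) (hB.eigenvalues_nonneg j) ht _ _

lemma exists_qf_eq_Fs {A B : Matrix n n ℂ} (hA : A.PosSemidef) (hB : B.PosSemidef)
    {t : ℝ} (ht : 0 < t) :
    ∃ X, qf A B t X = Fs hA.1 hB.1 t := by
  classical
  set U : Matrix n n ℂ := (hA.1.eigenvectorUnitary : Matrix n n ℂ) with hUdef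
  set V : Matrix n n ℂ := (hB.1.eigenvectorUnitary : Matrix n n ℂ) with hVdef
  set Y : Matrix n n ℂ := Matrix.of (fun i j =>
    ((t * hB.1.eigenvalues j / (hA.1.eigenvalues i + t * hB.1.eigenvalues j) : ℝ) : ℂ)
      * Wm hA.1 hB.1 i j) with hYdef
  refine ⟨U * Y * Vᴴ, ?_⟩
  have hU2 : Uᴴ * U = 1 := by
    rw [← Matrix.star_eq_conjTranspose]
    exact Matrix.mem_unitaryGroup_iff'.mp (hA.1.eigenvectorUnitary).2
  have hV2 : Vᴴ * V = 1 := by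
    rw [← Matrix.star_eq_conjTranspose]
    exact Matrix.mem_unitaryGroup_iff'.mp (hB.1.eigenvectorUnitary).2
  have hXY : Uᴴ * (U * Y * Vᴴ) * V = Y := by
    calc Uᴴ * (U * Y * Vᴴ) * V = (Uᴴ * U) * Y * (Vᴴ * V) := by
          simp only [Matrix.mul_assoc]
      _ = Y := by rw [hU2, hV2, Matrix.one_mul, Matrix.mul_one]
  rw [qf_expand A B hA.1 hB.1 t _, Fs]
  refine Finset.sum_congr rfl fun i _ => Finset.sum_congr rfl fun j _ => ?_
  rw [one_sub_expand hA.1 hB.1 _, Matrix.sub_apply, hXY]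
  have := hfun_min (hA.eigenvalues_nonneg i) (hB.eigenvalues_nonneg j) ht (Wm hA.1 hB.1 i j)
  simpa [hYdef] using this

lemma qf_lin (A B C E : Matrix n n ℂ) (l m t : ℝ) (X : Matrix n n ℂ) :
    qf (l • A + m • C) (l • B + m • E) t X = l * qf A B t X + m * qf C E t X := by
  simp only [qf, Matrix.mul_add, Matrix.add_mul, Matrix.mul_smul, Matrix.smul_mul,
    Matrix.trace_add, Matrix.trace_smul, Complex.add_re, Complex.real_smul,
    Complex.mul_re, Complex.ofReal_re, Complex.ofReal_im, zero_mul, sub_zero]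
  ring

lemma smul_posSemidef {A : Matrix n n ℂ} (hA : A.PosSemidef) {l : ℝ} (hl : 0 ≤ l) :
    (l • A).PosSemidef := by
  constructor
  · show (l • A)ᴴ = l • A
    rw [Matrix.conjTranspose_smul, star_trivial, hA.1]
  · intro x
    have h0 := hA.2 x
    exact (hA.smul hl).2 x

lemma Fs_superadd {A B C E : Matrix n n ℂ} (hA : A.PosSemidef) (hB : B.PosSemidef)
    (hC : C.PosSemidef) (hE : E.PosSemidef) {l m t : ℝ} (hl : 0 ≤ l) (hm : 0 ≤ m)
    (ht : 0 < t) (hM : (l • A + m • C).PosSemidef) (hN : (l • B + m • E).PosSemidef) :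
    l * Fs hA.1 hB.1 t + m * Fs hC.1 hE.1 t ≤ Fs hM.1 hN.1 t := by
  obtain ⟨X, hX⟩ := exists_qf_eq_Fs hM hN ht
  rw [← hX, qf_lin]
  have h1 := Fs_le_qf hA hB ht X
  have h2 := Fs_le_qf hC hE ht X
  nlinarith

open MeasureTheory Set Real

noncomputable def Is (s : ℝ) : ℝ := ∫ u in Set.Ioi (0:ℝ), u ^ (s-1) / (1 + u)

lemma phi_integrable {s : ℝ} (h0 : 0 < s) (h1 : s < 1) :
    IntegrableOn (fun u : ℝ => u ^ (s-1) / (1 + u)) (Set.Ioi (0:ℝ)) := by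
  have hmeas : ∀ (S : Set ℝ), AEStronglyMeasurable (fun u : ℝ => u ^ (s-1) / (1 + u))
      (volume.restrict S) := by
    intro S
    apply Measurable.aestronglyMeasurable
    fun_prop
  have hsub : Set.Ioi (0:ℝ) = Set.Ioc 0 1 ∪ Set.Ioi 1 := (Set.Ioc_union_Ioi_eq_Ioi zero_le_one).symm
  rw [hsub]
  apply MeasureTheory.IntegrableOn.union
  · have hint : IntegrableOn (fun u : ℝ => u ^ (s-1)) (Set.Ioc (0:ℝ) 1) := by
      have := intervalIntegral.intervalIntegrable_rpow' (a := 0) (b := 1) (r := s-1) (by linarith)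
      rwa [intervalIntegrable_iff_integrableOn_Ioc_of_le zero_le_one] at this
    apply Integrable.mono hint (hmeas _)
    filter_upwards [ae_restrict_mem measurableSet_Ioc] with u hu
    have hu0 : 0 < u := hu.1
    rw [Real.norm_eq_abs, Real.norm_eq_abs, _root_.abs_of_nonneg (by positivity),
      _root_.abs_of_nonneg (by positivity)]
    apply div_le_self (by positivity)
    linarith
  · have hint : IntegrableOn (fun u : ℝ => u ^ (s-2)) (Set.Ioi (1:ℝ)) :=
      integrableOn_Ioi_rpow_of_lt (by linarith) one_pos
    apply Integrable.mono hint (hmeas _)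
    filter_upwards [ae_restrict_mem measurableSet_Ioi] with u hu
    have hu0 : (1:ℝ) < u := hu
    have hu0' : (0:ℝ) < u := by linarith
    rw [Real.norm_eq_abs, Real.norm_eq_abs, _root_.abs_of_nonneg (by positivity),
      _root_.abs_of_nonneg (by positivity)]
    calc u ^ (s-1) / (1 + u) ≤ u ^ (s-1) / u := by
          apply div_le_div_of_nonneg_left (by positivity) hu0' (by linarith)
      _ = u ^ (s-2) := by
          rw [eq_comm, eq_div_iff (ne_of_gt hu0'), ← Real.rpow_add_one (ne_of_gt hu0')]
          congr 1
          ring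

lemma Is_pos {s : ℝ} (h0 : 0 < s) (h1 : s < 1) : 0 < Is s := by
  rw [Is, setIntegral_pos_iff_support_of_nonneg_ae ?pos (phi_integrable h0 h1)]
  case pos =>
    filter_upwards [ae_restrict_mem measurableSet_Ioi] with u hu
    have : (0:ℝ) < u := hu
    positivity
  have hsub : Set.Ioi (0:ℝ) ⊆ Function.support (fun u : ℝ => u ^ (s-1) / (1 + u)) ∩ Set.Ioi 0 := by
    intro u hu
    have hu' : (0:ℝ) < u := hu
    refine ⟨?_, hu⟩
    simp only [Function.mem_support]
    positivity
  calc (0 : ENNReal) < volume (Set.Ioi (0:ℝ)) := by simp [Real.volume_Ioi]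
    _ ≤ _ := measure_mono hsub

lemma int_core {s a b : ℝ} (h0 : 0 < s) (h1 : s < 1) (ha : 0 < a) (hb : 0 < b) :
    IntegrableOn (fun t : ℝ => t ^ (s-1) * (a * b / (a + t * b))) (Set.Ioi (0:ℝ)) ∧
    ∫ t in Set.Ioi (0:ℝ), t ^ (s-1) * (a * b / (a + t * b))
      = a ^ s * b ^ (1 - s) * Is s := by
  have hba : 0 < b / a := div_pos hb ha
  set c : ℝ := (a / b) ^ (s-1) * b with hc
  have key : Set.EqOn (fun t : ℝ => c * ((b/a * t) ^ (s-1) / (1 + b/a * t)))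
      (fun t : ℝ => t ^ (s-1) * (a * b / (a + t * b))) (Set.Ioi (0:ℝ)) := by
    intro t ht
    have ht' : (0:ℝ) < t := ht
    have hden : 0 < a + t * b := by positivity
    simp only
    rw [Real.mul_rpow hba.le ht'.le]
    have h2 : (a/b) ^ (s-1) * (b/a) ^ (s-1) = 1 := by
      rw [← Real.mul_rpow (by positivity) (by positivity)]
      have h3 : a/b * (b/a) = 1 := by field_simp
      rw [h3, Real.one_rpow]
    have h4 : 1 + b/a*t = (a + t*b)/a := by field_simp
    rw [h4, hc]
    field_simp
    linear_combination h2
  have hgi := phi_integrable h0 h1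
  have hcomp : IntegrableOn (fun t : ℝ => (b/a * t) ^ (s-1) / (1 + b/a * t))
      (Set.Ioi (0:ℝ)) := by
    have := (integrableOn_Ioi_comp_mul_left_iff
      (fun u : ℝ => u ^ (s-1) / (1 + u)) 0 hba).mpr
    simpa [mul_zero] using this (by simpa [mul_zero] using hgi)
  have hci : IntegrableOn (fun t : ℝ => c * ((b/a * t) ^ (s-1) / (1 + b/a * t)))
      (Set.Ioi (0:ℝ)) := hcomp.const_mul c
  constructor
  · exact hci.congr_fun key measurableSet_Ioi
  · rw [← setIntegral_congr_fun measurableSet_Ioi key]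
    rw [MeasureTheory.integral_const_mul]
    rw [integral_comp_mul_left_Ioi (fun u : ℝ => u ^ (s-1) / (1 + u)) 0 hba]
    rw [mul_zero]
    have hIs : ∫ u in Set.Ioi (0:ℝ), u ^ (s-1) / (1 + u) = Is s := rfl
    rw [hIs, smul_eq_mul]
    have habne : (a/b) ≠ 0 := by positivity
    have h5 : c * ((b/a)⁻¹ * Is s) = a ^ s * b ^ (1-s) * Is s := by
      have h6 : (b/a)⁻¹ = a/b := by rw [inv_div]
      have h7 : (a/b) ^ (s-1) * (a/b) = (a/b) ^ s := by
        rw [← Real.rpow_add_one habne]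
        norm_num
      have h8 : (a/b) ^ s = a ^ s / b ^ s := Real.div_rpow ha.le hb.le s
      have h9 : b ^ (1-s) = b / b ^ s := by
        rw [Real.rpow_sub hb, Real.rpow_one]
      have hbs : b ^ s ≠ 0 := by positivity
      have e1 : (a/b) ^ (s-1) * a * b ^ s = a ^ s * b := by
        have h10 : (a/b) ^ (s-1) * (a/b) = a ^ s / b ^ s := by rw [h7, h8]
        field_simp at h10
        linarith
      rw [h6, hc]
      rw [h9]
      field_simp
      linear_combination (Is s) * e1
    rw [h5]

lemma hfun_int {s : ℝ} (h0 : 0 < s) (h1 : s < 1) {a b : ℝ} (ha : 0 ≤ a) (hb : 0 ≤ b) :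
    IntegrableOn (fun t : ℝ => t ^ (s-2) * hfun t a b) (Set.Ioi (0:ℝ)) ∧
    ∫ t in Set.Ioi (0:ℝ), t ^ (s-2) * hfun t a b = gp a s * gp b (1-s) * Is s := by
  rcases eq_or_lt_of_le ha with rfl | ha'
  · have hz : (fun t : ℝ => t ^ (s-2) * hfun t 0 b) = fun _ => (0:ℝ) := by
      funext t; simp [hfun]
    rw [hz]
    exact ⟨integrableOn_zero, by simp [gp]⟩
  rcases eq_or_lt_of_le hb with rfl | hb'
  · have hz : (fun t : ℝ => t ^ (s-2) * hfun t a 0) = fun _ => (0:ℝ) := by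
      funext t; simp [hfun]
    rw [hz]
    exact ⟨integrableOn_zero, by simp [gp]⟩
  have hcore := int_core h0 h1 ha' hb'
  have heq : Set.EqOn (fun t : ℝ => t ^ (s-1) * (a * b / (a + t * b)))
      (fun t : ℝ => t ^ (s-2) * hfun t a b) (Set.Ioi (0:ℝ)) := by
    intro t ht
    have ht' : (0:ℝ) < t := ht
    have h2 : t ^ (s-1) = t ^ (s-2) * t := by
      rw [← Real.rpow_add_one (ne_of_gt ht')]; congr 1; ring
    simp only [hfun, h2]
    ring
  refine ⟨hcore.1.congr_fun heq measurableSet_Ioi, ?_⟩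
  rw [← setIntegral_congr_fun measurableSet_Ioi heq, hcore.2, gp, gp,
    if_neg (ne_of_gt ha'), if_neg (ne_of_gt hb')]

lemma qs_eq' (A B : Matrix n n ℂ) (hA : A.IsHermitian) (hB : B.IsHermitian) (s r : ℝ) :
    (Matrix.trace (matPow A s * matPow B r)).re
      = ∑ i, ∑ j, gp (hA.eigenvalues i) s * gp (hB.eigenvalues j) r * ‖Wm hA hB i j‖ ^ 2 := by
  rw [qs_eq A B hA hB s r]
  simp only [Wm, Matrix.star_eq_conjTranspose]

lemma rep {A B : Matrix n n ℂ} (hA : A.PosSemidef) (hB : B.PosSemidef)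
    {s : ℝ} (h0 : 0 < s) (h1 : s < 1) :
    IntegrableOn (fun t : ℝ => t ^ (s-2) * Fs hA.1 hB.1 t) (Set.Ioi (0:ℝ)) ∧
    ∫ t in Set.Ioi (0:ℝ), t ^ (s-2) * Fs hA.1 hB.1 t
      = (Matrix.trace (matPow A s * matPow B (1-s))).re * Is s := by
  have hint : ∀ i j, IntegrableOn (fun t : ℝ =>
      (t ^ (s-2) * hfun t (hA.1.eigenvalues i) (hB.1.eigenvalues j)) * ‖Wm hA.1 hB.1 i j‖ ^ 2)
      (Set.Ioi (0:ℝ)) := fun i j =>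
    ((hfun_int h0 h1 (hA.eigenvalues_nonneg i) (hB.eigenvalues_nonneg j)).1).mul_const _
  have hfg : ∀ t : ℝ, t ^ (s-2) * Fs hA.1 hB.1 t
      = ∑ i, ∑ j, (t ^ (s-2) * hfun t (hA.1.eigenvalues i) (hB.1.eigenvalues j))
          * ‖Wm hA.1 hB.1 i j‖ ^ 2 := by
    intro t
    rw [Fs, Finset.mul_sum]
    refine Finset.sum_congr rfl fun i _ => ?_
    rw [Finset.mul_sum]
    refine Finset.sum_congr rfl fun j _ => ?_
    ring
  have hfg' : (fun t : ℝ => t ^ (s-2) * Fs hA.1 hB.1 t)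
      = fun t => ∑ i, ∑ j, (t ^ (s-2) * hfun t (hA.1.eigenvalues i) (hB.1.eigenvalues j))
          * ‖Wm hA.1 hB.1 i j‖ ^ 2 := funext hfg
  constructor
  · rw [hfg']
    apply MeasureTheory.integrable_finset_sum
    intro i _
    exact MeasureTheory.integrable_finset_sum _ (fun j _ => hint i j)
  · rw [hfg']
    rw [MeasureTheory.integral_finset_sum _ (fun i _ =>
      MeasureTheory.integrable_finset_sum _ (fun j _ => hint i j))]
    rw [qs_eq' A B hA.1 hB.1 s (1-s), Finset.sum_mul]
    refine Finset.sum_congr rfl fun i _ => ?_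
    rw [MeasureTheory.integral_finset_sum _ (fun j _ => hint i j), Finset.sum_mul]
    refine Finset.sum_congr rfl fun j _ => ?_
    rw [MeasureTheory.integral_mul_const,
      (hfun_int h0 h1 (hA.eigenvalues_nonneg i) (hB.eigenvalues_nonneg j)).2]
    ring

open Filter Topology

lemma hfun_tendsto_atTop {a b : ℝ} (ha : 0 ≤ a) (hb : 0 ≤ b) :
    Tendsto (fun t : ℝ => hfun t a b) atTop (𝓝 (gp a 1 * gp b 0)) := by
  rcases eq_or_lt_of_le ha with rfl | ha'
  · have : (fun t : ℝ => hfun t 0 b) = fun _ => (0:ℝ) := by funext t; simp [hfun]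
    rw [this]
    simpa [gp] using tendsto_const_nhds
  rcases eq_or_lt_of_le hb with rfl | hb'
  · have : (fun t : ℝ => hfun t a 0) = fun _ => (0:ℝ) := by funext t; simp [hfun]
    rw [this]
    simpa [gp] using tendsto_const_nhds
  have hval : gp a 1 * gp b 0 = a := by
    rw [gp, gp, if_neg (ne_of_gt ha'), if_neg (ne_of_gt hb')]
    simp [Real.rpow_one]
  rw [hval]
  have hev : ∀ᶠ t in atTop, a * b / (a / t + b) = hfun t a b := by
    filter_upwards [eventually_gt_atTop (0:ℝ)] with t ht
    rw [hfun]
    rw [div_eq_div_iff (by positivity) (by positivity)]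
    field_simp
  have hden : Tendsto (fun t : ℝ => a / t + b) atTop (𝓝 (0 + b)) :=
    (tendsto_const_nhds.div_atTop tendsto_id).add tendsto_const_nhds
  rw [zero_add] at hden
  have hlim : Tendsto (fun t : ℝ => a * b / (a / t + b)) atTop (𝓝 (a * b / b)) :=
    tendsto_const_nhds.div hden (ne_of_gt hb')
  have : a * b / b = a := by field_simp
  rw [this] at hlim
  exact hlim.congr' hev

lemma hfun_tendsto_zero {a b : ℝ} (ha : 0 ≤ a) (hb : 0 ≤ b) :
    Tendsto (fun t : ℝ => hfun t a b / t) (𝓝[>] (0:ℝ)) (𝓝 (gp a 0 * gp b 1)) := by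
  rcases eq_or_lt_of_le ha with rfl | ha'
  · have : (fun t : ℝ => hfun t 0 b / t) = fun _ => (0:ℝ) := by funext t; simp [hfun]
    rw [this]
    simpa [gp] using tendsto_const_nhds
  rcases eq_or_lt_of_le hb with rfl | hb'
  · have : (fun t : ℝ => hfun t a 0 / t) = fun _ => (0:ℝ) := by funext t; simp [hfun]
    rw [this]
    simpa [gp] using tendsto_const_nhds
  have hval : gp a 0 * gp b 1 = b := by
    rw [gp, gp, if_neg (ne_of_gt ha'), if_neg (ne_of_gt hb')]
    simp [Real.rpow_one]
  rw [hval]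
  have hev : ∀ᶠ t in 𝓝[>] (0:ℝ), a * b / (a + t * b) = hfun t a b / t := by
    filter_upwards [self_mem_nhdsWithin] with t ht
    have ht' : (0:ℝ) < t := ht
    rw [hfun, div_div, div_eq_div_iff (by positivity) (by positivity)]
    ring
  have hlim : Tendsto (fun t : ℝ => a * b / (a + t * b)) (𝓝[>] (0:ℝ)) (𝓝 (a * b / (a + 0 * b))) := by
    apply Tendsto.mono_left ?_ nhdsWithin_le_nhds
    apply Tendsto.div tendsto_const_nhds
    · exact (tendsto_id.mul tendsto_const_nhds).const_add a
    · positivity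
  have : a * b / (a + 0 * b) = b := by field_simp; ring
  rw [this] at hlim
  exact hlim.congr' hev

lemma Fs_tendsto_atTop {A B : Matrix n n ℂ} (hA : A.PosSemidef) (hB : B.PosSemidef) :
    Tendsto (fun t : ℝ => Fs hA.1 hB.1 t) atTop
      (𝓝 ((Matrix.trace (matPow A 1 * matPow B 0)).re)) := by
  rw [qs_eq' A B hA.1 hB.1 1 0]
  apply tendsto_finset_sum
  intro i _
  apply tendsto_finset_sum
  intro j _
  exact (hfun_tendsto_atTop (hA.eigenvalues_nonneg i) (hB.eigenvalues_nonneg j)).mul_const _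

lemma Fs_tendsto_zero {A B : Matrix n n ℂ} (hA : A.PosSemidef) (hB : B.PosSemidef) :
    Tendsto (fun t : ℝ => Fs hA.1 hB.1 t / t) (𝓝[>] (0:ℝ))
      (𝓝 ((Matrix.trace (matPow A 0 * matPow B 1)).re)) := by
  rw [qs_eq' A B hA.1 hB.1 0 1]
  have : ∀ t : ℝ, Fs hA.1 hB.1 t / t
      = ∑ i, ∑ j, (hfun t (hA.1.eigenvalues i) (hB.1.eigenvalues j) / t) * ‖Wm hA.1 hB.1 i j‖ ^ 2 := by
    intro t
    rw [Fs, Finset.sum_div]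
    refine Finset.sum_congr rfl fun i _ => ?_
    rw [Finset.sum_div]
    refine Finset.sum_congr rfl fun j _ => ?_
    ring
  rw [funext this]
  apply tendsto_finset_sum
  intro i _
  apply tendsto_finset_sum
  intro j _
  exact (hfun_tendsto_zero (hA.eigenvalues_nonneg i) (hB.eigenvalues_nonneg j)).mul_const _

variable {A B C E : Matrix n n ℂ}

lemma middle (hA : A.PosSemidef) (hB : B.PosSemidef) (hC : C.PosSemidef) (hE : E.PosSemidef)
    {l s : ℝ} (hl0 : 0 ≤ l) (hl1 : l ≤ 1) (h0 : 0 < s) (h1 : s < 1) :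
    l * (Matrix.trace (matPow A s * matPow B (1-s))).re
      + (1-l) * (Matrix.trace (matPow C s * matPow E (1-s))).re
    ≤ (Matrix.trace (matPow (l • A + (1-l) • C) s * matPow (l • B + (1-l) • E) (1-s))).re := by
  have hm0 : (0:ℝ) ≤ 1 - l := by linarith
  have hM : (l • A + (1-l) • C).PosSemidef := (smul_posSemidef hA hl0).add (smul_posSemidef hC hm0)
  have hN : (l • B + (1-l) • E).PosSemidef := (smul_posSemidef hB hl0).add (smul_posSemidef hE hm0)
  obtain ⟨iAB, vAB⟩ := rep hA hB h0 h1
  obtain ⟨iCE, vCE⟩ := rep hC hE h0 h1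
  obtain ⟨iMN, vMN⟩ := rep hM hN h0 h1
  have hIs := Is_pos h0 h1
  rw [← mul_le_mul_iff_of_pos_right hIs, ← vMN]
  have expand : (l * (Matrix.trace (matPow A s * matPow B (1-s))).re
      + (1-l) * (Matrix.trace (matPow C s * matPow E (1-s))).re) * Is s
      = ∫ t in Set.Ioi (0:ℝ),
          (l * (t ^ (s-2) * Fs hA.1 hB.1 t) + (1-l) * (t ^ (s-2) * Fs hC.1 hE.1 t)) := by
    rw [MeasureTheory.integral_add (iAB.const_mul l) (iCE.const_mul (1-l)),
      MeasureTheory.integral_const_mul, MeasureTheory.integral_const_mul, vAB, vCE]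
    ring
  rw [expand]
  apply MeasureTheory.setIntegral_mono_on
      ((iAB.const_mul l).add (iCE.const_mul (1-l))) iMN measurableSet_Ioi
  intro t ht
  have ht' : (0:ℝ) < t := ht
  have hsup := Fs_superadd hA hB hC hE hl0 hm0 ht' hM hN
  have hw : 0 ≤ t ^ (s-2) := Real.rpow_nonneg ht'.le _
  calc l * (t ^ (s-2) * Fs hA.1 hB.1 t) + (1-l) * (t ^ (s-2) * Fs hC.1 hE.1 t)
      = t ^ (s-2) * (l * Fs hA.1 hB.1 t + (1-l) * Fs hC.1 hE.1 t) := by ring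
    _ ≤ t ^ (s-2) * Fs hM.1 hN.1 t := mul_le_mul_of_nonneg_left hsup hw

lemma endOne (hA : A.PosSemidef) (hB : B.PosSemidef) (hC : C.PosSemidef) (hE : E.PosSemidef)
    {l : ℝ} (hl0 : 0 ≤ l) (hl1 : l ≤ 1) :
    l * (Matrix.trace (matPow A 1 * matPow B 0)).re
      + (1-l) * (Matrix.trace (matPow C 1 * matPow E 0)).re
    ≤ (Matrix.trace (matPow (l • A + (1-l) • C) 1 * matPow (l • B + (1-l) • E) 0)).re := by
  have hm0 : (0:ℝ) ≤ 1 - l := by linarith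
  have hM : (l • A + (1-l) • C).PosSemidef := (smul_posSemidef hA hl0).add (smul_posSemidef hC hm0)
  have hN : (l • B + (1-l) • E).PosSemidef := (smul_posSemidef hB hl0).add (smul_posSemidef hE hm0)
  have hlhs : Tendsto (fun t : ℝ => l * Fs hA.1 hB.1 t + (1-l) * Fs hC.1 hE.1 t) atTop
      (𝓝 (l * (Matrix.trace (matPow A 1 * matPow B 0)).re
        + (1-l) * (Matrix.trace (matPow C 1 * matPow E 0)).re)) :=
    ((Fs_tendsto_atTop hA hB).const_mul l).add ((Fs_tendsto_atTop hC hE).const_mul (1-l))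
  have hrhs := Fs_tendsto_atTop hM hN
  apply le_of_tendsto_of_tendsto hlhs hrhs
  filter_upwards [eventually_gt_atTop (0:ℝ)] with t ht
  exact Fs_superadd hA hB hC hE hl0 hm0 ht hM hN

lemma endZero (hA : A.PosSemidef) (hB : B.PosSemidef) (hC : C.PosSemidef) (hE : E.PosSemidef)
    {l : ℝ} (hl0 : 0 ≤ l) (hl1 : l ≤ 1) :
    l * (Matrix.trace (matPow A 0 * matPow B 1)).re
      + (1-l) * (Matrix.trace (matPow C 0 * matPow E 1)).re
    ≤ (Matrix.trace (matPow (l • A + (1-l) • C) 0 * matPow (l • B + (1-l) • E) 1)).re := by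
  have hm0 : (0:ℝ) ≤ 1 - l := by linarith
  have hM : (l • A + (1-l) • C).PosSemidef := (smul_posSemidef hA hl0).add (smul_posSemidef hC hm0)
  have hN : (l • B + (1-l) • E).PosSemidef := (smul_posSemidef hB hl0).add (smul_posSemidef hE hm0)
  have hlhs : Tendsto (fun t : ℝ => l * (Fs hA.1 hB.1 t / t) + (1-l) * (Fs hC.1 hE.1 t / t))
      (𝓝[>] (0:ℝ))
      (𝓝 (l * (Matrix.trace (matPow A 0 * matPow B 1)).re
        + (1-l) * (Matrix.trace (matPow C 0 * matPow E 1)).re)) :=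
    ((Fs_tendsto_zero hA hB).const_mul l).add ((Fs_tendsto_zero hC hE).const_mul (1-l))
  have hrhs := Fs_tendsto_zero hM hN
  apply le_of_tendsto_of_tendsto hlhs hrhs
  filter_upwards [self_mem_nhdsWithin] with t ht
  have ht' : (0:ℝ) < t := ht
  have hsup := Fs_superadd hA hB hC hE hl0 hm0 ht' hM hN
  have h2 : (l * Fs hA.1 hB.1 t + (1-l) * Fs hC.1 hE.1 t) / t ≤ Fs hM.1 hN.1 t / t := by
    gcongr
  calc l * (Fs hA.1 hB.1 t / t) + (1-l) * (Fs hC.1 hE.1 t / t)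
      = (l * Fs hA.1 hB.1 t + (1-l) * Fs hC.1 hE.1 t) / t := by ring
    _ ≤ Fs hM.1 hN.1 t / t := h2

end LiebAux

/-- Spectral norm (largest singular value) of a complex matrix, i.e. the operator norm
of the induced map on Euclidean space. -/
noncomputable def specNorm {n : Type*} [Fintype n] [DecidableEq n] (A : Matrix n n ℂ) : ℝ :=
  ‖Matrix.toEuclideanCLM (𝕜 := ℂ) (n := n) A‖

/-- `Tr(ρ^s ρ'^{1-s})` as a real number. -/
noncomputable def qs {n : Type*} [Fintype n] [DecidableEq n]
    (ρ ρ' : Matrix n n ℂ) (s : ℝ) : ℝ :=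
  (Matrix.trace (matPow ρ s * matPow ρ' (1 - s))).re

/-- Lieb's concavity in the form used in the paper: joint concavity of
`(A, B) ↦ Tr(A^s B^{1-s})` on pairs of positive semidefinite matrices. -/
theorem lieb_concavity_trace {D : ℕ} (hD : 1 ≤ D) (s : ℝ) (hs : s ∈ Set.Icc (0:ℝ) 1)
    (A B C E : Matrix (Fin D) (Fin D) ℂ)
    (hA : A.PosSemidef) (hB : B.PosSemidef) (hC : C.PosSemidef) (hE : E.PosSemidef)
    (l : ℝ) (hl : l ∈ Set.Icc (0:ℝ) 1) :
    l * qs A B s + (1 - l) * qs C E s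
      ≤ qs (l • A + (1 - l) • C) (l • B + (1 - l) • E) s := by
  obtain ⟨hs0, hs1⟩ := hs
  obtain ⟨hl0, hl1⟩ := hl
  unfold qs
  rcases eq_or_lt_of_le hs0 with h | h0
  · rw [← h]
    rw [show (1:ℝ) - 0 = 1 by norm_num]
    exact LiebAux.endZero hA hB hC hE hl0 hl1
  rcases eq_or_lt_of_le hs1 with rfl | h1
  · rw [show (1:ℝ) - 1 = 0 by norm_num]
    exact LiebAux.endOne hA hB hC hE hl0 hl1
  · exact LiebAux.middle hA hB hC hE hl0 hl1 h0 h1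
end

section
/- One-sided bound from the proof of Theorem 1 (Appendix D): fix a dimension D ≥ 1 and s ∈ [0,1]. Let ρ, ρ' be density matrices and σ, σ' Hermitian complex D×D matrices with ρ+σ and ρ'+σ' positive semidefinite. Suppose L1 ≥ 0 satisfies ‖A^s − B^s‖_spec ≤ L1·‖A−B‖_spec for all positive semidefinite A, B with spectral norm at most 1 + ‖σ‖_spec, and suppose L2 ≥ 0 satisfies ‖A^{1−s} − B^{1−s}‖_spec ≤ L2·‖A−B‖_spec for all positive semidefinite A, B with spectral norm at most 1 + ‖σ'‖_spec. Then |Tr(ρ^s ρ'^{1−s}) − Tr((ρ+σ)^s (ρ'+σ')^{1−s})| ≤ D·[ L1·‖σ‖_spec·(1 + ‖σ'‖_spec)^{1−s} + L2·‖σ'‖_spec ]. -/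
open scoped ComplexOrder

open Matrix

open scoped Matrix.Norms.L2Operator

section Aux

variable {n : Type*} [Fintype n] [DecidableEq n]

lemma specNorm_eq (A : Matrix n n ℂ) : specNorm A = ‖A‖ := rfl

lemma specNorm_diagonal_le (v : n → ℂ) (c : ℝ) (hc : 0 ≤ c)
    (h : ∀ i, ‖v i‖ ≤ c) : ‖Matrix.diagonal v‖ ≤ c := by
  rw [Matrix.l2_opNorm_def]
  apply ContinuousLinearMap.opNorm_le_bound _ hc
  intro x
  rw [EuclideanSpace.norm_eq, EuclideanSpace.norm_eq]
  have key : ∀ i, ‖((toEuclideanLin ≪≫ₗ LinearMap.toContinuousLinearMap)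
      (Matrix.diagonal v) x) i‖ ^ 2 ≤ c ^ 2 * ‖x i‖ ^ 2 := by
    intro i
    have : ((toEuclideanLin ≪≫ₗ LinearMap.toContinuousLinearMap)
        (Matrix.diagonal v) x) i = v i * x i := by
      simp [Matrix.toEuclideanLin_apply, Matrix.mulVec_diagonal]
    rw [this, norm_mul, mul_pow]
    gcongr
    exact h i
  calc √(∑ i, ‖((toEuclideanLin ≪≫ₗ LinearMap.toContinuousLinearMap)
        (Matrix.diagonal v) x) i‖ ^ 2) ≤ √(∑ i, c ^ 2 * ‖x i‖ ^ 2) := by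
        apply Real.sqrt_le_sqrt
        exact Finset.sum_le_sum fun i _ => key i
    _ = c * √(∑ i, ‖x i‖ ^ 2) := by
        rw [← Finset.mul_sum, Real.sqrt_mul (sq_nonneg c), Real.sqrt_sq hc]

lemma entry_abs_le_specNorm (A : Matrix n n ℂ) (i j : n) :
    ‖A i j‖ ≤ specNorm A := by
  rw [specNorm_eq]
  have h1 := Matrix.l2_opNorm_mulVec A (EuclideanSpace.single j (1:ℂ))
  rw [EuclideanSpace.norm_single, norm_one, mul_one] at h1
  refine le_trans ?_ h1
  have h2 : ((EuclideanSpace.equiv n ℂ).symm (A *ᵥ (EuclideanSpace.single j (1:ℂ)))) i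
      = A i j := by
    show (A *ᵥ (Pi.single j 1)) i = A i j
    simp [Matrix.mulVec_single]
  calc ‖A i j‖
      = ‖((EuclideanSpace.equiv n ℂ).symm (A *ᵥ (EuclideanSpace.single j (1:ℂ)))) i‖ := by
        rw [h2]
    _ ≤ ‖(EuclideanSpace.equiv n ℂ).symm (A *ᵥ (EuclideanSpace.single j (1:ℂ)))‖ := by
        set y := (EuclideanSpace.equiv n ℂ).symm (A *ᵥ (EuclideanSpace.single j (1:ℂ)))
        rw [EuclideanSpace.norm_eq]
        rw [show ‖y i‖ = √(‖y i‖^2) by rw [Real.sqrt_sq (norm_nonneg _)]]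
        apply Real.sqrt_le_sqrt
        exact Finset.single_le_sum (f := fun k => ‖y k‖^2)
          (fun k _ => sq_nonneg _) (Finset.mem_univ i)

lemma abs_trace_le (A : Matrix n n ℂ) :
    ‖A.trace‖ ≤ (Fintype.card n : ℝ) * specNorm A := by
  calc ‖A.trace‖ ≤ ∑ i, ‖A i i‖ := by
        exact (norm_sum_le _ _)
    _ ≤ ∑ _i : n, specNorm A := Finset.sum_le_sum fun i _ => entry_abs_le_specNorm A i i
    _ = (Fintype.card n : ℝ) * specNorm A := by
        rw [Finset.sum_const, Finset.card_univ, nsmul_eq_mul]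

lemma eigenvalue_abs_le_specNorm {A : Matrix n n ℂ} (hA : A.IsHermitian) (i : n) :
    |hA.eigenvalues i| ≤ specNorm A := by
  rw [specNorm_eq]
  have h1 := Matrix.l2_opNorm_mulVec A (hA.eigenvectorBasis i)
  have key : A *ᵥ (hA.eigenvectorBasis i : EuclideanSpace ℂ n)
      = hA.eigenvalues i • ⇑(hA.eigenvectorBasis i) := hA.mulVec_eigenvectorBasis i
  rw [key] at h1
  have hnorm : ‖hA.eigenvectorBasis i‖ = 1 := hA.eigenvectorBasis.orthonormal.1 i
  have h2 : ‖(EuclideanSpace.equiv n ℂ).symm (hA.eigenvalues i • ⇑(hA.eigenvectorBasis i))‖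
      = |hA.eigenvalues i| := by
    have h3 : (EuclideanSpace.equiv n ℂ).symm (hA.eigenvalues i • ⇑(hA.eigenvectorBasis i))
        = hA.eigenvalues i • hA.eigenvectorBasis i := rfl
    rw [h3, norm_smul, hnorm, mul_one, Real.norm_eq_abs]
  rw [h2, hnorm, mul_one] at h1
  exact h1

lemma matPow_posSemidef {A : Matrix n n ℂ} (hA : A.PosSemidef) (t : ℝ) :
    (matPow A t).PosSemidef := by
  rw [matPow, dif_pos hA.1]
  have h : star (hA.1.eigenvectorUnitary : Matrix n n ℂ)
      = (hA.1.eigenvectorUnitary : Matrix n n ℂ)ᴴ := rfl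
  rw [h]
  apply Matrix.PosSemidef.mul_mul_conjTranspose_same
  rw [Matrix.posSemidef_diagonal_iff]
  intro i
  have h := hA.eigenvalues_nonneg i
  by_cases h0 : hA.1.eigenvalues i = 0
  · simp [h0]
  · simp only [h0, if_false]
    rw [Complex.zero_le_real]
    positivity

lemma nontrivial_matrix [Nonempty n] : Nontrivial (Matrix n n ℂ) := by
  obtain ⟨i⟩ := ‹Nonempty n›
  exact ⟨0, 1, fun h => by simpa using congrFun (congrFun h i) i⟩

lemma norm_unitary_conj [Nonempty n] (U : Matrix.unitaryGroup n ℂ) (A : Matrix n n ℂ) :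
    ‖(U : Matrix n n ℂ) * A * star (U : Matrix n n ℂ)‖ = ‖A‖ := by
  haveI : Nontrivial (Matrix n n ℂ) := nontrivial_matrix
  rw [mul_assoc, CStarRing.norm_coe_unitary_mul, ← Unitary.coe_star,
    CStarRing.norm_mul_coe_unitary]

lemma specNorm_matPow_le [Nonempty n] {A : Matrix n n ℂ} (hA : A.PosSemidef)
    {t M : ℝ} (ht : 0 ≤ t) (hM : 1 ≤ M) (h : specNorm A ≤ M) :
    specNorm (matPow A t) ≤ M ^ t := by
  rw [specNorm_eq, matPow, dif_pos hA.1, norm_unitary_conj]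
  apply specNorm_diagonal_le _ _ (Real.rpow_nonneg (by linarith) t)
  intro i
  by_cases h0 : hA.1.eigenvalues i = 0
  · simp only [h0, if_true, Complex.ofReal_zero, map_zero, norm_zero]
    positivity
  · simp only [h0, if_false, Complex.norm_real, Real.norm_eq_abs]
    have h1 : hA.1.eigenvalues i ≤ M := by
      calc hA.1.eigenvalues i ≤ |hA.1.eigenvalues i| := le_abs_self _
        _ ≤ specNorm A := eigenvalue_abs_le_specNorm hA.1 i
        _ ≤ M := h
    have h2 : (0:ℝ) ≤ hA.1.eigenvalues i := hA.eigenvalues_nonneg i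
    rw [abs_of_nonneg (Real.rpow_nonneg h2 t)]
    exact Real.rpow_le_rpow h2 h1 ht

lemma specNorm_le_retrace [Nonempty n] {A : Matrix n n ℂ} (hA : A.PosSemidef) :
    specNorm A ≤ A.trace.re := by
  have htr : A.trace = ∑ i, (hA.1.eigenvalues i : ℂ) := by
    conv_lhs => rw [hA.1.spectral_theorem, Unitary.conjStarAlgAut_apply]
    rw [Matrix.trace_mul_cycle, Unitary.coe_star_mul_self, Matrix.one_mul,
      Matrix.trace_diagonal]
    rfl
  have hre : A.trace.re = ∑ i, hA.1.eigenvalues i := by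
    rw [htr]; simp
  rw [specNorm_eq, hre]
  conv_lhs => rw [hA.1.spectral_theorem, Unitary.conjStarAlgAut_apply]
  rw [norm_unitary_conj]
  apply specNorm_diagonal_le
  · exact Finset.sum_nonneg fun i _ => hA.eigenvalues_nonneg i
  · intro i
    have habs : ‖((RCLike.ofReal ∘ hA.1.eigenvalues) i : ℂ)‖ = hA.1.eigenvalues i := by
      simp [Function.comp, abs_of_nonneg (hA.eigenvalues_nonneg i)]
    rw [habs]
    exact Finset.single_le_sum (fun j _ => hA.eigenvalues_nonneg j) (Finset.mem_univ i)

end Aux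

/-- One-sided bound from the proof of Theorem 1 (Appendix D). -/
theorem one_sided_bound {D : ℕ} (hD : 1 ≤ D) (s : ℝ) (hs : s ∈ Set.Icc (0:ℝ) 1)
    (ρ ρ' σ σ' : Matrix (Fin D) (Fin D) ℂ)
    (hρ : ρ.PosSemidef) (hρtr : ρ.trace = 1)
    (hρ' : ρ'.PosSemidef) (hρ'tr : ρ'.trace = 1)
    (hσ : σ.IsHermitian) (hσ' : σ'.IsHermitian)
    (h1 : (ρ + σ).PosSemidef) (h3 : (ρ' + σ').PosSemidef)
    (L1 L2 : ℝ) (hL1 : 0 ≤ L1) (hL2 : 0 ≤ L2)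
    (hLip1 : ∀ A B : Matrix (Fin D) (Fin D) ℂ, A.PosSemidef → B.PosSemidef →
      specNorm A ≤ 1 + specNorm σ → specNorm B ≤ 1 + specNorm σ →
      specNorm (matPow A s - matPow B s) ≤ L1 * specNorm (A - B))
    (hLip2 : ∀ A B : Matrix (Fin D) (Fin D) ℂ, A.PosSemidef → B.PosSemidef →
      specNorm A ≤ 1 + specNorm σ' → specNorm B ≤ 1 + specNorm σ' →
      specNorm (matPow A (1 - s) - matPow B (1 - s)) ≤ L2 * specNorm (A - B)) :
    |qs ρ ρ' s - qs (ρ + σ) (ρ' + σ') s| ≤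
      (D : ℝ) * (L1 * specNorm σ * (1 + specNorm σ') ^ (1 - s) + L2 * specNorm σ') := by
  haveI : Nonempty (Fin D) := ⟨⟨0, hD⟩⟩
  obtain ⟨hs0, hs1⟩ := hs
  have hσn : 0 ≤ specNorm σ := by rw [specNorm_eq]; exact norm_nonneg _
  have hσ'n : 0 ≤ specNorm σ' := by rw [specNorm_eq]; exact norm_nonneg _
  have hρn : specNorm ρ ≤ 1 := by
    have := specNorm_le_retrace hρ
    rw [hρtr] at this; simpa using this
  have hρ'n : specNorm ρ' ≤ 1 := by
    have := specNorm_le_retrace hρ'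
    rw [hρ'tr] at this; simpa using this
  have hρσ : specNorm (ρ + σ) ≤ 1 + specNorm σ := by
    simp only [specNorm_eq] at *
    exact (norm_add_le _ _).trans (by linarith)
  have hρ'σ' : specNorm (ρ' + σ') ≤ 1 + specNorm σ' := by
    simp only [specNorm_eq] at *
    exact (norm_add_le _ _).trans (by linarith)
  have hP1 : specNorm (matPow ρ s) ≤ 1 := by
    have := specNorm_matPow_le hρ hs0 le_rfl hρn
    rwa [Real.one_rpow] at this
  have hP2 : specNorm (matPow (ρ' + σ') (1 - s)) ≤ (1 + specNorm σ') ^ (1 - s) :=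
    specNorm_matPow_le h3 (by linarith) (by linarith) hρ'σ'
  have hD1 : specNorm (matPow ρ s - matPow (ρ + σ) s) ≤ L1 * specNorm σ := by
    have := hLip1 ρ (ρ + σ) hρ h1 (by linarith) hρσ
    have hsub : ρ - (ρ + σ) = -σ := by abel
    rw [hsub] at this
    rwa [show specNorm (-σ) = specNorm σ by rw [specNorm_eq, specNorm_eq, norm_neg]] at this
  have hD2 : specNorm (matPow ρ' (1-s) - matPow (ρ' + σ') (1-s)) ≤ L2 * specNorm σ' := by
    have := hLip2 ρ' (ρ' + σ') hρ' h3 (by linarith) hρ'σ'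
    have hsub : ρ' - (ρ' + σ') = -σ' := by abel
    rw [hsub] at this
    rwa [show specNorm (-σ') = specNorm σ' by rw [specNorm_eq, specNorm_eq, norm_neg]] at this
  set A := matPow ρ s
  set B := matPow ρ' (1 - s)
  set C := matPow (ρ + σ) s
  set E := matPow (ρ' + σ') (1 - s)
  have hsplit : A * B - C * E = A * (B - E) + (A - C) * E := by noncomm_ring
  have htrace : qs ρ ρ' s - qs (ρ + σ) (ρ' + σ') s
      = (Matrix.trace (A * (B - E) + (A - C) * E)).re := by
    rw [qs, qs, hsplit.symm]
    rw [Matrix.trace_sub]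
    simp [Complex.sub_re]
    rfl
  rw [htrace]
  have habs : |(Matrix.trace (A * (B - E) + (A - C) * E)).re|
      ≤ ‖Matrix.trace (A * (B - E) + (A - C) * E)‖ := Complex.abs_re_le_norm _
  refine habs.trans ?_
  have hbound := abs_trace_le (A * (B - E) + (A - C) * E)
  rw [Fintype.card_fin] at hbound
  refine hbound.trans ?_
  have hnorm : specNorm (A * (B - E) + (A - C) * E)
      ≤ L1 * specNorm σ * (1 + specNorm σ') ^ (1 - s) + L2 * specNorm σ' := by
    have e1 : specNorm (A * (B - E) + (A - C) * E)
        ≤ specNorm (A * (B - E)) + specNorm ((A - C) * E) := by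
      simp only [specNorm_eq]
      exact norm_add_le _ _
    have e2 : specNorm (A * (B - E)) ≤ specNorm A * specNorm (B - E) := by
      simp only [specNorm_eq]; exact Matrix.l2_opNorm_mul _ _
    have e3 : specNorm ((A - C) * E) ≤ specNorm (A - C) * specNorm E := by
      simp only [specNorm_eq]; exact Matrix.l2_opNorm_mul _ _
    have nn : ∀ X : Matrix (Fin D) (Fin D) ℂ, 0 ≤ specNorm X := by
      intro X; rw [specNorm_eq]; exact norm_nonneg _
    have e4 : specNorm A * specNorm (B - E) ≤ 1 * (L2 * specNorm σ') :=
      mul_le_mul hP1 hD2 (nn _) zero_le_one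
    have e5 : specNorm (A - C) * specNorm E
        ≤ (L1 * specNorm σ) * ((1 + specNorm σ') ^ (1 - s)) := by
      apply mul_le_mul hD1 hP2 (nn _)
      positivity
    calc specNorm (A * (B - E) + (A - C) * E)
        ≤ specNorm (A * (B - E)) + specNorm ((A - C) * E) := e1
      _ ≤ specNorm A * specNorm (B - E) + specNorm (A - C) * specNorm E :=
          add_le_add e2 e3
      _ ≤ 1 * (L2 * specNorm σ') + (L1 * specNorm σ) * ((1 + specNorm σ') ^ (1 - s)) :=
          add_le_add e4 e5
      _ = L1 * specNorm σ * (1 + specNorm σ') ^ (1 - s) + L2 * specNorm σ' := by ring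
  exact mul_le_mul_of_nonneg_left hnorm (Nat.cast_nonneg D)
end

section
/- Intermediate convexity step in the proof of Theorem 2: fix a dimension D ≥ 1 and s ∈ [0,1]. Let ρ, ρ' be density matrices and σ, σ' Hermitian complex D×D matrices with ρ+σ, ρ−σ, ρ'+σ', ρ'−σ' positive semidefinite, and let F_s(γ) := (1/2)[Tr((ρ+γσ)^s (ρ'+γσ')^{1−s}) + Tr((ρ−γσ)^s (ρ'−γσ')^{1−s})]. Then for all 0 < γ1 < γ2 ≤ 1, setting λ := γ1/γ2, one has F_s(γ1) ≥ λ·F_s(γ2) + (1−λ)·Tr(ρ^s ρ'^{1−s}). -/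
open scoped ComplexOrder

open Matrix

/-- The function `F_s(γ)` of the paper. -/
noncomputable def Fs {n : Type*} [Fintype n] [DecidableEq n]
    (ρ ρ' σ σ' : Matrix n n ℂ) (s γ : ℝ) : ℝ :=
  (1/2) * (qs (ρ + γ • σ) (ρ' + γ • σ') s + qs (ρ - γ • σ) (ρ' - γ • σ') s)


section Aux

open MeasureTheory Set

noncomputable def ps (a c : ℝ) : ℝ := if a + c = 0 then 0 else a * c / (a + c)
noncomputable def fpow (t x : ℝ) : ℝ := if x = 0 then 0 else x ^ t
noncomputable def Js (s : ℝ) : ℝ := ∫ u in Set.Ioi (0:ℝ), u ^ (s-1) / (1+u)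

lemma base_integrable {s : ℝ} (hs0 : 0 < s) (hs1 : s < 1) :
    IntegrableOn (fun u : ℝ => u ^ (s-1) / (1+u)) (Ioi 0) := by
  have hmeas : ∀ t : Set ℝ, t ⊆ Ioi 0 → MeasurableSet t →
      AEStronglyMeasurable (fun u : ℝ => u ^ (s-1) / (1+u)) (volume.restrict t) := by
    intro t ht hm
    apply ContinuousOn.aestronglyMeasurable ?_ hm
    apply ContinuousOn.div
    · exact ContinuousOn.rpow_const continuousOn_id (fun x hx => Or.inl (ne_of_gt (ht hx)))
    · fun_prop
    · intro x hx; have := ht hx; simp only [mem_Ioi] at this; positivity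
  have h1 : IntegrableOn (fun u : ℝ => u ^ (s-1) / (1+u)) (Ioc 0 1) := by
    have hg : IntegrableOn (fun u : ℝ => u ^ (s-1)) (Ioc (0:ℝ) 1) := by
      rw [← intervalIntegrable_iff_integrableOn_Ioc_of_le zero_le_one]
      exact intervalIntegral.intervalIntegrable_rpow' (by linarith)
    refine hg.mono' (hmeas _ Ioc_subset_Ioi_self measurableSet_Ioc) ?_
    filter_upwards [ae_restrict_mem measurableSet_Ioc] with u hu
    have hu0 : 0 < u := hu.1
    rw [Real.norm_eq_abs, abs_of_nonneg (by positivity), div_le_iff₀ (by positivity)]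
    nlinarith [Real.rpow_nonneg hu0.le (s-1)]
  have h2 : IntegrableOn (fun u : ℝ => u ^ (s-1) / (1+u)) (Ioi 1) := by
    have hg : IntegrableOn (fun u : ℝ => u ^ (s-2)) (Ioi (1:ℝ)) :=
      integrableOn_Ioi_rpow_of_lt (by linarith) one_pos
    refine hg.mono' (hmeas _ (fun x hx => mem_Ioi.mpr (lt_trans one_pos (mem_Ioi.mp hx))) measurableSet_Ioi) ?_
    filter_upwards [ae_restrict_mem measurableSet_Ioi] with u hu
    have hu0 : (1:ℝ) < u := hu
    rw [Real.norm_eq_abs, abs_of_nonneg (by positivity), div_le_iff₀ (by positivity)]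
    have : u ^ (s-2) * u = u ^ (s-1) := by
      rw [← Real.rpow_add_one (by positivity) ]; ring_nf
    nlinarith [Real.rpow_nonneg (le_of_lt (lt_trans one_pos hu0)) (s-2)]
  have := h1.union h2
  rwa [Set.Ioc_union_Ioi_eq_Ioi zero_le_one] at this

lemma Js_pos {s : ℝ} (hs0 : 0 < s) (hs1 : s < 1) : 0 < Js s := by
  have hint := base_integrable hs0 hs1
  have hnn : ∀ u ∈ Ioi (0:ℝ), 0 ≤ u ^ (s-1) / (1+u) := by
    intro u hu; have : (0:ℝ) < u := hu; positivity
  have hsub : Ioc (1:ℝ) 2 ⊆ Ioi 0 := fun x hx => lt_trans one_pos hx.1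
  have step1 : (∫ u in Ioc (1:ℝ) 2, u ^ (s-1) / (1+u)) ≤ Js s := by
    apply setIntegral_mono_set hint
    · filter_upwards [ae_restrict_mem measurableSet_Ioi] with u hu using hnn u hu
    · exact Filter.Eventually.of_forall hsub
  have step2 : (2:ℝ) ^ (s-1) / 3 ≤ ∫ u in Ioc (1:ℝ) 2, u ^ (s-1) / (1+u) := by
    have hconst : (∫ _ in Ioc (1:ℝ) 2, (2:ℝ) ^ (s-1) / 3) = 2 ^ (s-1) / 3 := by
      rw [setIntegral_const]
      simp [Real.volume_Ioc]
      norm_num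
    rw [← hconst]
    apply setIntegral_mono_on
    · exact integrable_const _
    · exact hint.mono_set hsub
    · exact measurableSet_Ioc
    · intro u hu
      have h1u : (1:ℝ) < u := hu.1
      have h2u : u ≤ 2 := hu.2
      have hb : (2:ℝ) ^ (s-1) ≤ u ^ (s-1) := by
        apply Real.rpow_le_rpow_of_nonpos (by linarith) h2u (by linarith)
      have hd : (1:ℝ)/(3:ℝ) ≤ 1/(1+u) := by
        rw [div_le_div_iff₀ (by norm_num) (by linarith)]; linarith
      calc (2:ℝ) ^ (s-1) / 3 = 2 ^ (s-1) * (1/3) := by ring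
        _ ≤ u ^ (s-1) * (1/(1+u)) := by
            apply mul_le_mul hb hd (by norm_num) (Real.rpow_nonneg (by linarith) _)
        _ = u ^ (s-1) / (1+u) := by ring
  have : (0:ℝ) < (2:ℝ) ^ (s-1) / 3 := by positivity
  linarith

lemma key_pointwise {s a b : ℝ} (ha : 0 < a) (hb : 0 < b) {l : ℝ} (hl : l ∈ Ioi (0:ℝ)) :
    l^(s-2) * ps a (l*b)
      = (a^(s-1)*b^(2-s)) * (((b/a)*l)^(s-1)/(1+(b/a)*l)) := by
  have hl0 : (0:ℝ) < l := hl
  have h1 : ps a (l*b) = a*(l*b)/(a+l*b) := by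
    rw [ps, if_neg (by positivity)]
  have e1 : a^(s-1)*a^(1-s) = 1 := by
    rw [← Real.rpow_add ha]; norm_num
  have e2 : b^(2-s)*b^(s-1) = b := by
    rw [← Real.rpow_add hb]; norm_num
  have e3 : ((b/a)*l)^(s-1) = b^(s-1)*a^(1-s) * l^(s-1) := by
    rw [Real.mul_rpow (by positivity) hl0.le, Real.div_rpow hb.le ha.le,
      show (1-s) = -(s-1) by ring, Real.rpow_neg ha.le, div_eq_mul_inv]
  have e4 : 1+(b/a)*l = (a+l*b)/a := by field_simp
  have el : l^(s-1) = l^(s-2)*l := by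
    rw [show s-1 = (s-2)+1 by ring, Real.rpow_add_one hl0.ne']
  rw [h1, e3, e4, el]
  have hne : a + l*b ≠ 0 := by positivity
  field_simp
  ring_nf
  ring_nf at e1 e2
  linear_combination (-(b^(2-s)*b^(-1+s)))*e1 + (-1)*e2

lemma ps_zero_left (c : ℝ) : ps 0 c = 0 := by unfold ps; split <;> simp
lemma ps_zero_right (a : ℝ) : ps a 0 = 0 := by unfold ps; split <;> simp
lemma fpow_zero' (t : ℝ) : fpow t 0 = 0 := by simp [fpow]
lemma fpow_of_pos {t x : ℝ} (hx : 0 < x) : fpow t x = x ^ t := by simp [fpow, hx.ne']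

lemma scalar_integrable {s a b : ℝ} (hs0 : 0 < s) (hs1 : s < 1) (ha : 0 ≤ a) (hb : 0 ≤ b) :
    IntegrableOn (fun l : ℝ => l^(s-2) * ps a (l*b)) (Ioi 0) := by
  rcases eq_or_lt_of_le ha with ha0 | ha
  · simp [← ha0, ps_zero_left]
  rcases eq_or_lt_of_le hb with hb0 | hb
  · simp [← hb0, ps_zero_right]
  have hc : 0 < b/a := by positivity
  have hg : IntegrableOn (fun u : ℝ => (a^(s-1)*b^(2-s)) * (u^(s-1)/(1+u))) (Ioi 0) :=
    (base_integrable hs0 hs1).const_mul _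
  have h2 := (integrableOn_Ioi_comp_mul_left_iff
      (fun u : ℝ => (a^(s-1)*b^(2-s)) * (u^(s-1)/(1+u))) 0 hc).mpr (by simpa using hg)
  exact IntegrableOn.congr_fun (by simpa [mul_assoc] using h2)
    (fun l hl => (key_pointwise ha hb hl).symm) measurableSet_Ioi

lemma scalar_integral {s a b : ℝ} (hs0 : 0 < s) (hs1 : s < 1) (ha : 0 ≤ a) (hb : 0 ≤ b) :
    ∫ l in Ioi (0:ℝ), l^(s-2) * ps a (l*b) = fpow s a * fpow (1-s) b * Js s := by
  rcases eq_or_lt_of_le ha with ha0 | ha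
  · simp [← ha0, ps_zero_left, fpow_zero']
  rcases eq_or_lt_of_le hb with hb0 | hb
  · simp [← hb0, ps_zero_right, fpow_zero']
  have hc : 0 < b/a := by positivity
  have step1 : ∫ l in Ioi (0:ℝ), l^(s-2) * ps a (l*b)
      = ∫ l in Ioi (0:ℝ), (a^(s-1)*b^(2-s)) * (((b/a)*l)^(s-1)/(1+(b/a)*l)) :=
    setIntegral_congr_fun measurableSet_Ioi (fun l hl => key_pointwise ha hb hl)
  rw [step1,
    integral_comp_mul_left_Ioi (fun u : ℝ => (a^(s-1)*b^(2-s)) * (u^(s-1)/(1+u))) 0 hc,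
    mul_zero, integral_const_mul]
  rw [fpow_of_pos ha, fpow_of_pos hb]
  have e1 : a * a^(s-1) = a^s := by
    rw [show s = (s-1)+1 by ring, Real.rpow_add_one ha.ne']; ring
  have e2 : b^(2-s) = b^(1-s) * b := by
    rw [show (2:ℝ)-s = (1-s)+1 by ring, Real.rpow_add_one hb.ne']
  rw [smul_eq_mul]
  rw [show ((b/a)⁻¹ : ℝ) = a/b by rw [inv_div], e2, ← Js]
  field_simp
  linear_combination (Js s)*e1

variable {n : Type*} [Fintype n] [DecidableEq n]

lemma DME_entry (d e : n → ℝ) (M : Matrix n n ℂ) (i : n) :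
    (Matrix.diagonal (fun i => (d i:ℂ)) * M * Matrix.diagonal (fun j => (e j:ℂ)) * star M) i i
      = ∑ j, ((d i * e j * Complex.normSq (M i j) : ℝ) : ℂ) := by
  rw [Matrix.mul_apply]
  refine Finset.sum_congr rfl (fun j _ => ?_)
  rw [Matrix.mul_diagonal, Matrix.diagonal_mul, Matrix.star_apply]
  simp only [Complex.star_def, Complex.ofReal_mul, ← Complex.mul_conj]
  ring

lemma trace_pair_re (U V : Matrix n n ℂ) (d e : n → ℝ) :
    (Matrix.trace ((U * Matrix.diagonal (fun i => (d i : ℂ)) * star U) *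
        (V * Matrix.diagonal (fun j => (e j : ℂ)) * star V))).re
      = ∑ i, ∑ j, d i * e j * Complex.normSq ((star U * V) i j) := by
  have h1 : (U * Matrix.diagonal (fun i => (d i : ℂ)) * star U) *
        (V * Matrix.diagonal (fun j => (e j : ℂ)) * star V)
      = U * (Matrix.diagonal (fun i => (d i : ℂ)) *
          (star U * (V * (Matrix.diagonal (fun j => (e j : ℂ)) * star V)))) := by
    simp only [Matrix.mul_assoc]
  rw [h1, Matrix.trace_mul_comm]
  have h2 : (Matrix.diagonal (fun i => (d i : ℂ)) *
        (star U * (V * (Matrix.diagonal (fun j => (e j : ℂ)) * star V)))) * U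
      = Matrix.diagonal (fun i => (d i : ℂ)) * (star U * V) *
          Matrix.diagonal (fun j => (e j : ℂ)) * star (star U * V) := by
    simp only [StarMul.star_mul, star_star, Matrix.mul_assoc]
  rw [h2, Matrix.trace]
  simp only [Matrix.diag]
  rw [Complex.re_sum]
  refine Finset.sum_congr rfl (fun i _ => ?_)
  rw [DME_entry, Complex.re_sum]
  exact Finset.sum_congr rfl (fun j _ => Complex.ofReal_re _)

lemma trace_PDP_re (d : n → ℝ) (P : Matrix n n ℂ) :
    (Matrix.trace (star P * Matrix.diagonal (fun i => (d i:ℂ)) * P)).re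
      = ∑ i, ∑ j, d i * Complex.normSq (P i j) := by
  rw [Matrix.trace]
  simp only [Matrix.diag]
  rw [Complex.re_sum]
  have h : ∀ j, ((star P * Matrix.diagonal (fun i => (d i:ℂ)) * P) j j).re
      = ∑ i, d i * Complex.normSq (P i j) := by
    intro j
    rw [Matrix.mul_apply, Complex.re_sum]
    refine Finset.sum_congr rfl (fun i _ => ?_)
    rw [Matrix.mul_diagonal, Matrix.star_apply]
    have : star (P i j) * ↑(d i) * P i j = ((d i * Complex.normSq (P i j) : ℝ) : ℂ) := by
      simp only [Complex.star_def, Complex.ofReal_mul, ← Complex.mul_conj]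
      ring
    rw [this, Complex.ofReal_re]
  simp_rw [h]
  rw [Finset.sum_comm]

lemma trace_PEP_re (e : n → ℝ) (P : Matrix n n ℂ) :
    (Matrix.trace (P * Matrix.diagonal (fun j => (e j:ℂ)) * star P)).re
      = ∑ i, ∑ j, e j * Complex.normSq (P i j) := by
  rw [Matrix.trace]
  simp only [Matrix.diag]
  rw [Complex.re_sum]
  refine Finset.sum_congr rfl (fun i _ => ?_)
  rw [Matrix.mul_apply, Complex.re_sum]
  refine Finset.sum_congr rfl (fun j _ => ?_)
  rw [Matrix.mul_diagonal, Matrix.star_apply]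
  have : P i j * ↑(e j) * star (P i j) = ((e j * Complex.normSq (P i j) : ℝ) : ℂ) := by
    simp only [Complex.star_def, Complex.ofReal_mul, ← Complex.mul_conj]
    ring
  rw [this, Complex.ofReal_re]

lemma trace_transfer_left (U V X D : Matrix n n ℂ) (hV : V * star V = 1) :
    Matrix.trace (star (star U * X * V) * D * (star U * X * V))
      = Matrix.trace (star X * (U * D * star U) * X) := by
  have h : star (star U * X * V) * D * (star U * X * V)
      = star V * (star X * (U * D * star U) * X) * V := by
    simp only [StarMul.star_mul, star_star, Matrix.mul_assoc]
  rw [h, Matrix.trace_mul_cycle, hV, Matrix.one_mul]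

lemma trace_transfer_right (U V Y E : Matrix n n ℂ) (hU : U * star U = 1) :
    Matrix.trace ((star U * Y * V) * E * star (star U * Y * V))
      = Matrix.trace (Y * (V * E * star V) * star Y) := by
  have h : (star U * Y * V) * E * star (star U * Y * V)
      = star U * (Y * (V * E * star V) * star Y) * U := by
    simp only [StarMul.star_mul, star_star, Matrix.mul_assoc]
  rw [h, Matrix.trace_mul_cycle, hU, Matrix.one_mul]

/-- the quadratic functional of the parallel-sum variational principle -/
noncomputable def hfun (A B : Matrix n n ℂ) (l : ℝ) (Y : Matrix n n ℂ) : ℝ :=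
  (Matrix.trace (star (1 - Y) * A * (1 - Y))).re + l * (Matrix.trace (Y * B * star Y)).re

lemma hfun_coord {A B : Matrix n n ℂ} (hA : A.IsHermitian) (hB : B.IsHermitian)
    (l : ℝ) (Y : Matrix n n ℂ) :
    hfun A B l Y = ∑ i, ∑ j,
      (hA.eigenvalues i * Complex.normSq
          ((star (hA.eigenvectorUnitary : Matrix n n ℂ) * (hB.eigenvectorUnitary : Matrix n n ℂ)
            - star (hA.eigenvectorUnitary : Matrix n n ℂ) * Y *
                (hB.eigenvectorUnitary : Matrix n n ℂ)) i j)
        + (l * hB.eigenvalues j) * Complex.normSq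
          ((star (hA.eigenvectorUnitary : Matrix n n ℂ) * Y *
              (hB.eigenvectorUnitary : Matrix n n ℂ)) i j)) := by
  set U : Matrix n n ℂ := (hA.eigenvectorUnitary : Matrix n n ℂ) with hUdef
  set V : Matrix n n ℂ := (hB.eigenvectorUnitary : Matrix n n ℂ) with hVdef
  have hU : U * star U = 1 := Matrix.mem_unitaryGroup_iff.mp (hA.eigenvectorUnitary).2
  have hV : V * star V = 1 := Matrix.mem_unitaryGroup_iff.mp (hB.eigenvectorUnitary).2
  have hP : star U * (1 - Y) * V = star U * V - star U * Y * V := by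
    rw [Matrix.mul_sub, Matrix.mul_one, Matrix.sub_mul]
  have t1 : (Matrix.trace (star (1 - Y) * A * (1 - Y))).re
      = ∑ i, ∑ j, hA.eigenvalues i *
          Complex.normSq ((star U * V - star U * Y * V) i j) := by
    conv_lhs => rw [hA.spectral_theorem, Unitary.conjStarAlgAut_apply]
    rw [← trace_transfer_left U V (1 - Y) _ hV, hP]
    have : Matrix.diagonal (RCLike.ofReal ∘ hA.eigenvalues)
        = Matrix.diagonal (fun i => ((hA.eigenvalues i : ℝ) : ℂ)) := rfl
    rw [this, trace_PDP_re]
  have t2 : (Matrix.trace (Y * B * star Y)).re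
      = ∑ i, ∑ j, hB.eigenvalues j * Complex.normSq ((star U * Y * V) i j) := by
    conv_lhs => rw [hB.spectral_theorem, Unitary.conjStarAlgAut_apply]
    rw [← trace_transfer_right U V Y _ hU]
    have : Matrix.diagonal (RCLike.ofReal ∘ hB.eigenvalues)
        = Matrix.diagonal (fun j => ((hB.eigenvalues j : ℝ) : ℂ)) := rfl
    rw [this, trace_PEP_re]
  rw [hfun, t1, t2, Finset.mul_sum]
  rw [← Finset.sum_add_distrib]
  refine Finset.sum_congr rfl (fun i _ => ?_)
  rw [Finset.mul_sum, ← Finset.sum_add_distrib]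
  refine Finset.sum_congr rfl (fun j _ => ?_)
  ring

lemma hfun_affine (A1 B1 A2 B2 : Matrix n n ℂ) (t l : ℝ) (Y : Matrix n n ℂ) :
    hfun (t • A1 + (1-t) • A2) (t • B1 + (1-t) • B2) l Y
      = t * hfun A1 B1 l Y + (1-t) * hfun A2 B2 l Y := by
  simp only [hfun, Matrix.mul_add, Matrix.add_mul, Matrix.mul_smul, Matrix.smul_mul,
    Matrix.trace_add, Matrix.trace_smul, Complex.add_re, Complex.real_smul,
    Complex.re_ofReal_mul]
  ring

lemma scalar_lower {a c : ℝ} (ha : 0 ≤ a) (hc : 0 ≤ c) (m y : ℂ) :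
    Complex.normSq m * ps a c ≤ a * Complex.normSq (m - y) + c * Complex.normSq y := by
  by_cases h : a + c = 0
  · rw [ps, if_pos h, mul_zero]
    have := Complex.normSq_nonneg (m - y); have := Complex.normSq_nonneg y
    nlinarith
  have hac : 0 < a + c := lt_of_le_of_ne (by positivity) (Ne.symm h)
  rw [ps, if_neg h, mul_div_assoc', div_le_iff₀ hac]
  have hm : ‖m‖ ≤ ‖m - y‖ + ‖y‖ := by
    calc ‖m‖ = ‖(m - y) + y‖ := by rw [sub_add_cancel]
      _ ≤ _ := norm_add_le _ _
  have h2 : ‖m‖ ^ 2 ≤ (‖m - y‖ + ‖y‖) ^ 2 :=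
    pow_le_pow_left₀ (norm_nonneg m) hm 2
  have e1 : Complex.normSq m = ‖m‖ ^ 2 := (Complex.sq_norm m).symm
  have e2 : Complex.normSq (m - y) = ‖m - y‖ ^ 2 := (Complex.sq_norm _).symm
  have e3 : Complex.normSq y = ‖y‖ ^ 2 := (Complex.sq_norm _).symm
  rw [e1, e2, e3]
  nlinarith [sq_nonneg (a * ‖m - y‖ - c * ‖y‖),
    mul_le_mul_of_nonneg_left h2 (mul_nonneg ha hc), norm_nonneg (m - y),
    norm_nonneg y]

lemma scalar_eq {a c : ℝ} (ha : 0 ≤ a) (hc : 0 ≤ c) (m : ℂ) :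
    a * Complex.normSq (m - ((a/(a+c) : ℝ) : ℂ) * m) + c * Complex.normSq (((a/(a+c) : ℝ) : ℂ) * m)
      = Complex.normSq m * ps a c := by
  by_cases h : a + c = 0
  · have ha0 : a = 0 := by linarith
    have hc0 : c = 0 := by linarith
    simp [ha0, hc0, ps]
  have hac : 0 < a + c := lt_of_le_of_ne (by positivity) (Ne.symm h)
  have key : m - ((a/(a+c) : ℝ) : ℂ) * m = ((c/(a+c) : ℝ) : ℂ) * m := by
    push_cast
    have : ((a:ℂ)+(c:ℂ)) ≠ 0 := by
      intro hh
      have := congrArg Complex.re hh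
      simp at this; exact h (by linarith)
    field_simp
    ring
  rw [key, Complex.normSq_mul, Complex.normSq_mul, Complex.normSq_ofReal,
    Complex.normSq_ofReal, ps, if_neg h]
  field_simp
  ring

noncomputable def KK {A B : Matrix n n ℂ} (hA : A.IsHermitian) (hB : B.IsHermitian)
    (l : ℝ) : ℝ :=
  ∑ i, ∑ j, ps (hA.eigenvalues i) (l * hB.eigenvalues j) *
    Complex.normSq ((star (hA.eigenvectorUnitary : Matrix n n ℂ) *
      (hB.eigenvectorUnitary : Matrix n n ℂ)) i j)

lemma K1 {A B : Matrix n n ℂ} (hA : A.PosSemidef) (hB : B.PosSemidef)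
    {l : ℝ} (hl : 0 ≤ l) (Y : Matrix n n ℂ) :
    KK hA.1 hB.1 l ≤ hfun A B l Y := by
  rw [hfun_coord hA.1 hB.1, KK]
  refine Finset.sum_le_sum (fun i _ => Finset.sum_le_sum (fun j _ => ?_))
  have h := scalar_lower (hA.eigenvalues_nonneg i)
    (mul_nonneg hl (hB.eigenvalues_nonneg j))
    ((star (hA.1.eigenvectorUnitary : Matrix n n ℂ) *
      (hB.1.eigenvectorUnitary : Matrix n n ℂ)) i j)
    ((star (hA.1.eigenvectorUnitary : Matrix n n ℂ) * Y *
      (hB.1.eigenvectorUnitary : Matrix n n ℂ)) i j)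
  rw [Matrix.sub_apply]
  calc ps (hA.1.eigenvalues i) (l * hB.1.eigenvalues j) *
        Complex.normSq ((star (hA.1.eigenvectorUnitary : Matrix n n ℂ) *
          (hB.1.eigenvectorUnitary : Matrix n n ℂ)) i j)
      = Complex.normSq ((star (hA.1.eigenvectorUnitary : Matrix n n ℂ) *
          (hB.1.eigenvectorUnitary : Matrix n n ℂ)) i j) *
          ps (hA.1.eigenvalues i) (l * hB.1.eigenvalues j) := by ring
    _ ≤ _ := h

lemma K2 {A B : Matrix n n ℂ} (hA : A.PosSemidef) (hB : B.PosSemidef)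
    {l : ℝ} (hl : 0 ≤ l) :
    ∃ Y : Matrix n n ℂ, hfun A B l Y = KK hA.1 hB.1 l := by
  set U : Matrix n n ℂ := (hA.1.eigenvectorUnitary : Matrix n n ℂ) with hUdef
  set V : Matrix n n ℂ := (hB.1.eigenvectorUnitary : Matrix n n ℂ) with hVdef
  set M : Matrix n n ℂ := star U * V with hMdef
  set T : Matrix n n ℂ := Matrix.of fun i j =>
    ((hA.1.eigenvalues i / (hA.1.eigenvalues i + l * hB.1.eigenvalues j) : ℝ) : ℂ) * M i j
    with hTdef
  refine ⟨U * T * star V, ?_⟩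
  have hU : star U * U = 1 := Matrix.mem_unitaryGroup_iff'.mp (hA.1.eigenvectorUnitary).2
  have hV : star V * V = 1 := Matrix.mem_unitaryGroup_iff'.mp (hB.1.eigenvectorUnitary).2
  have hT : star U * (U * T * star V) * V = T := by
    calc star U * (U * T * star V) * V = (star U * U) * T * (star V * V) := by
          simp only [Matrix.mul_assoc]
      _ = T := by rw [hU, hV, Matrix.one_mul, Matrix.mul_one]
  rw [hfun_coord hA.1 hB.1, KK]
  refine Finset.sum_congr rfl (fun i _ => Finset.sum_congr rfl (fun j _ => ?_))
  rw [← hUdef, ← hVdef, ← hMdef, hT, Matrix.sub_apply]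
  have hTij : T i j = ((hA.1.eigenvalues i / (hA.1.eigenvalues i + l * hB.1.eigenvalues j) : ℝ) : ℂ)
      * M i j := rfl
  rw [hTij]
  have h := scalar_eq (hA.eigenvalues_nonneg i) (mul_nonneg hl (hB.eigenvalues_nonneg j)) (M i j)
  calc hA.1.eigenvalues i * Complex.normSq (M i j -
        ((hA.1.eigenvalues i / (hA.1.eigenvalues i + l * hB.1.eigenvalues j) : ℝ) : ℂ) * M i j)
        + (l * hB.1.eigenvalues j) * Complex.normSq
          (((hA.1.eigenvalues i / (hA.1.eigenvalues i + l * hB.1.eigenvalues j) : ℝ) : ℂ) * M i j)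
      = Complex.normSq (M i j) * ps (hA.1.eigenvalues i) (l * hB.1.eigenvalues j) := h
    _ = ps (hA.1.eigenvalues i) (l * hB.1.eigenvalues j) * Complex.normSq (M i j) := by ring

lemma K_concave {A1 B1 A2 B2 : Matrix n n ℂ}
    (hA1 : A1.PosSemidef) (hB1 : B1.PosSemidef) (hA2 : A2.PosSemidef) (hB2 : B2.PosSemidef)
    {t : ℝ} (ht0 : 0 ≤ t) (ht1 : t ≤ 1) {l : ℝ} (hl : 0 ≤ l)
    (hA : ((t:ℝ) • A1 + (1-t) • A2).PosSemidef) (hB : ((t:ℝ) • B1 + (1-t) • B2).PosSemidef) :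
    t * KK hA1.1 hB1.1 l + (1-t) * KK hA2.1 hB2.1 l ≤ KK hA.1 hB.1 l := by
  obtain ⟨Y, hY⟩ := K2 hA hB hl
  rw [← hY, hfun_affine]
  exact add_le_add (mul_le_mul_of_nonneg_left (K1 hA1 hB1 hl Y) ht0)
    (mul_le_mul_of_nonneg_left (K1 hA2 hB2 hl Y) (by linarith))

lemma matPow_eq {A : Matrix n n ℂ} (hA : A.IsHermitian) (t : ℝ) :
    matPow A t = (hA.eigenvectorUnitary : Matrix n n ℂ) *
      Matrix.diagonal (fun i => ((fpow t (hA.eigenvalues i) : ℝ) : ℂ)) *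
      star (hA.eigenvectorUnitary : Matrix n n ℂ) := by
  rw [matPow, dif_pos hA]; rfl

lemma qs_eq_sum {A B : Matrix n n ℂ} (hA : A.IsHermitian) (hB : B.IsHermitian) (s : ℝ) :
    qs A B s = ∑ i, ∑ j, fpow s (hA.eigenvalues i) * fpow (1-s) (hB.eigenvalues j) *
      Complex.normSq ((star (hA.eigenvectorUnitary : Matrix n n ℂ) *
        (hB.eigenvectorUnitary : Matrix n n ℂ)) i j) := by
  rw [qs, matPow_eq hA, matPow_eq hB, trace_pair_re]

open MeasureTheory Set in
lemma KK_integrable {A B : Matrix n n ℂ} (hA : A.PosSemidef) (hB : B.PosSemidef)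
    {s : ℝ} (hs0 : 0 < s) (hs1 : s < 1) :
    IntegrableOn (fun l : ℝ => l^(s-2) * KK hA.1 hB.1 l) (Ioi 0) := by
  have hrw : (fun l : ℝ => l^(s-2) * KK hA.1 hB.1 l)
      = fun l : ℝ => ∑ i, ∑ j, (l^(s-2) * ps (hA.1.eigenvalues i) (l * hB.1.eigenvalues j)) *
          Complex.normSq ((star (hA.1.eigenvectorUnitary : Matrix n n ℂ) *
            (hB.1.eigenvectorUnitary : Matrix n n ℂ)) i j) := by
    funext l
    rw [KK, Finset.mul_sum]
    refine Finset.sum_congr rfl fun i _ => ?_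
    rw [Finset.mul_sum]
    exact Finset.sum_congr rfl fun j _ => by ring
  rw [hrw]
  refine integrable_finset_sum _ (fun i _ => integrable_finset_sum _ (fun j _ => ?_))
  exact (scalar_integrable hs0 hs1 (hA.eigenvalues_nonneg i)
    (hB.eigenvalues_nonneg j)).mul_const _

open MeasureTheory Set in
lemma KK_integral {A B : Matrix n n ℂ} (hA : A.PosSemidef) (hB : B.PosSemidef)
    {s : ℝ} (hs0 : 0 < s) (hs1 : s < 1) :
    ∫ l in Ioi (0:ℝ), l^(s-2) * KK hA.1 hB.1 l = qs A B s * Js s := by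
  have hrw : (fun l : ℝ => l^(s-2) * KK hA.1 hB.1 l)
      = fun l : ℝ => ∑ i, ∑ j, (l^(s-2) * ps (hA.1.eigenvalues i) (l * hB.1.eigenvalues j)) *
          Complex.normSq ((star (hA.1.eigenvectorUnitary : Matrix n n ℂ) *
            (hB.1.eigenvectorUnitary : Matrix n n ℂ)) i j) := by
    funext l
    rw [KK, Finset.mul_sum]
    refine Finset.sum_congr rfl fun i _ => ?_
    rw [Finset.mul_sum]
    exact Finset.sum_congr rfl fun j _ => by ring
  rw [hrw, integral_finset_sum _ (fun i _ => integrable_finset_sum _ (fun j _ =>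
    (scalar_integrable hs0 hs1 (hA.eigenvalues_nonneg i)
      (hB.eigenvalues_nonneg j)).mul_const _))]
  rw [qs_eq_sum hA.1 hB.1, Finset.sum_mul]
  refine Finset.sum_congr rfl (fun i _ => ?_)
  rw [integral_finset_sum _ (fun j _ => (scalar_integrable hs0 hs1 (hA.eigenvalues_nonneg i)
      (hB.eigenvalues_nonneg j)).mul_const _), Finset.sum_mul]
  refine Finset.sum_congr rfl (fun j _ => ?_)
  rw [integral_mul_const, scalar_integral hs0 hs1 (hA.eigenvalues_nonneg i)
    (hB.eigenvalues_nonneg j)]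
  ring

lemma psd_real_smul {A : Matrix n n ℂ} (hA : A.PosSemidef) {c : ℝ} (hc : 0 ≤ c) :
    (c • A).PosSemidef := by
  constructor
  · show (c • A)ᴴ = c • A
    rw [Matrix.conjTranspose_smul, star_trivial, hA.1]
  · intro x
    convert smul_nonneg hc (hA.2 x) using 1
    rw [Complex.real_smul, Finsupp.mul_sum]
    refine Finsupp.sum_congr (fun i _ => ?_)
    rw [Finsupp.mul_sum]
    refine Finsupp.sum_congr (fun j _ => ?_)
    simp only [Matrix.smul_apply, Complex.real_smul]
    ring

lemma psd_mix {A1 A2 : Matrix n n ℂ} (hA1 : A1.PosSemidef) (hA2 : A2.PosSemidef)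
    {t : ℝ} (ht0 : 0 ≤ t) (ht1 : t ≤ 1) : ((t:ℝ) • A1 + (1-t) • A2).PosSemidef :=
  (psd_real_smul hA1 ht0).add (psd_real_smul hA2 (by linarith))

lemma continuous_fpow_base {x : ℝ} (hx : 0 ≤ x) : Continuous (fun t : ℝ => fpow t x) := by
  rcases eq_or_lt_of_le hx with h0 | hx
  · have : (fun t : ℝ => fpow t x) = fun _ => (0:ℝ) := by
      funext t; rw [fpow, if_pos h0.symm]
    rw [this]; exact continuous_const
  · have : (fun t : ℝ => fpow t x) = fun t => Real.exp (Real.log x * t) := by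
      funext t; rw [fpow, if_neg hx.ne', Real.rpow_def_of_pos hx]
    rw [this]; fun_prop

lemma qs_continuous {A B : Matrix n n ℂ} (hA : A.PosSemidef) (hB : B.PosSemidef) :
    Continuous (fun s : ℝ => qs A B s) := by
  have hrw : (fun s : ℝ => qs A B s) = fun s : ℝ => ∑ i, ∑ j,
      fpow s (hA.1.eigenvalues i) * fpow (1-s) (hB.1.eigenvalues j) *
      Complex.normSq ((star (hA.1.eigenvectorUnitary : Matrix n n ℂ) *
        (hB.1.eigenvectorUnitary : Matrix n n ℂ)) i j) :=
    funext (fun s => qs_eq_sum hA.1 hB.1 s)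
  rw [hrw]
  refine continuous_finset_sum _ (fun i _ => continuous_finset_sum _ (fun j _ => ?_))
  exact ((continuous_fpow_base (hA.eigenvalues_nonneg i)).mul
    ((continuous_fpow_base (hB.eigenvalues_nonneg j)).comp
      (continuous_const.sub continuous_id))).mul continuous_const

open MeasureTheory Set in
lemma qs_concave_mid {A1 B1 A2 B2 : Matrix n n ℂ}
    (hA1 : A1.PosSemidef) (hB1 : B1.PosSemidef) (hA2 : A2.PosSemidef) (hB2 : B2.PosSemidef)
    {t : ℝ} (ht0 : 0 ≤ t) (ht1 : t ≤ 1) {s : ℝ} (hs0 : 0 < s) (hs1 : s < 1) :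
    t * qs A1 B1 s + (1-t) * qs A2 B2 s
      ≤ qs ((t:ℝ) • A1 + (1-t) • A2) ((t:ℝ) • B1 + (1-t) • B2) s := by
  have hA := psd_mix hA1 hA2 ht0 ht1
  have hB := psd_mix hB1 hB2 ht0 ht1
  have hJ := Js_pos hs0 hs1
  rw [← mul_le_mul_iff_of_pos_right hJ, ← KK_integral hA hB hs0 hs1]
  have lhs_eq : (t * qs A1 B1 s + (1-t) * qs A2 B2 s) * Js s
      = ∫ l in Ioi (0:ℝ), (t * (l^(s-2) * KK hA1.1 hB1.1 l)
          + (1-t) * (l^(s-2) * KK hA2.1 hB2.1 l)) := by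
    rw [integral_add ((KK_integrable hA1 hB1 hs0 hs1).const_mul t)
      ((KK_integrable hA2 hB2 hs0 hs1).const_mul (1-t)),
      integral_const_mul, integral_const_mul,
      KK_integral hA1 hB1 hs0 hs1, KK_integral hA2 hB2 hs0 hs1]
    ring
  rw [lhs_eq]
  apply setIntegral_mono_on
  · exact ((KK_integrable hA1 hB1 hs0 hs1).const_mul t).add
      ((KK_integrable hA2 hB2 hs0 hs1).const_mul (1-t))
  · exact KK_integrable hA hB hs0 hs1
  · exact measurableSet_Ioi
  · intro l hl
    have hl0 : (0:ℝ) < l := hl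
    have hKc := K_concave hA1 hB1 hA2 hB2 ht0 ht1 hl0.le hA hB
    have hp : 0 ≤ l^(s-2) := Real.rpow_nonneg hl0.le _
    nlinarith [mul_le_mul_of_nonneg_left hKc hp]

lemma qs_concave {A1 B1 A2 B2 : Matrix n n ℂ}
    (hA1 : A1.PosSemidef) (hB1 : B1.PosSemidef) (hA2 : A2.PosSemidef) (hB2 : B2.PosSemidef)
    {t : ℝ} (ht0 : 0 ≤ t) (ht1 : t ≤ 1) {s : ℝ} (hs : s ∈ Set.Icc (0:ℝ) 1) :
    t * qs A1 B1 s + (1-t) * qs A2 B2 s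
      ≤ qs ((t:ℝ) • A1 + (1-t) • A2) ((t:ℝ) • B1 + (1-t) • B2) s := by
  have hA := psd_mix hA1 hA2 ht0 ht1
  have hB := psd_mix hB1 hB2 ht0 ht1
  have hcont1 : Continuous (fun s : ℝ => t * qs A1 B1 s + (1-t) * qs A2 B2 s) :=
    (continuous_const.mul (qs_continuous hA1 hB1)).add
      (continuous_const.mul (qs_continuous hA2 hB2))
  have hcont2 : Continuous (fun s : ℝ =>
      qs ((t:ℝ) • A1 + (1-t) • A2) ((t:ℝ) • B1 + (1-t) • B2) s) := qs_continuous hA hB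
  have hIoo : ∀ x ∈ Set.Ioo (0:ℝ) 1, t * qs A1 B1 x + (1-t) * qs A2 B2 x
      ≤ qs ((t:ℝ) • A1 + (1-t) • A2) ((t:ℝ) • B1 + (1-t) • B2) x :=
    fun x hx => qs_concave_mid hA1 hB1 hA2 hB2 ht0 ht1 hx.1 hx.2
  have hclos : closure (Set.Ioo (0:ℝ) 1) = Set.Icc (0:ℝ) 1 := closure_Ioo zero_ne_one
  exact le_on_closure hIoo hcont1.continuousOn hcont2.continuousOn (by rw [hclos]; exact hs)


end Aux

/-- Intermediate convexity step in the proof of Theorem 2. -/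
theorem Fs_convexity_step {D : ℕ} (hD : 1 ≤ D) (s : ℝ) (hs : s ∈ Set.Icc (0:ℝ) 1)
    (ρ ρ' σ σ' : Matrix (Fin D) (Fin D) ℂ)
    (hρ : ρ.PosSemidef) (hρtr : ρ.trace = 1)
    (hρ' : ρ'.PosSemidef) (hρ'tr : ρ'.trace = 1)
    (hσ : σ.IsHermitian) (hσ' : σ'.IsHermitian)
    (h1 : (ρ + σ).PosSemidef) (h2 : (ρ - σ).PosSemidef)
    (h3 : (ρ' + σ').PosSemidef) (h4 : (ρ' - σ').PosSemidef)
    (γ1 γ2 : ℝ) (hγ1 : 0 < γ1) (h12 : γ1 < γ2) (hγ2 : γ2 ≤ 1) :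
    (γ1 / γ2) * Fs ρ ρ' σ σ' s γ2 + (1 - γ1 / γ2) * qs ρ ρ' s
      ≤ Fs ρ ρ' σ σ' s γ1 := by
  have hγ2pos : 0 < γ2 := lt_trans hγ1 h12
  set t : ℝ := γ1 / γ2 with htdef
  have ht0 : 0 ≤ t := by positivity
  have ht1 : t ≤ 1 := by rw [htdef, div_le_one hγ2pos]; linarith
  have htγ2 : t * γ2 = γ1 := div_mul_cancel₀ γ1 hγ2pos.ne'
  have hplus : ∀ (X S : Matrix (Fin D) (Fin D) ℂ), (X + S).PosSemidef → X.PosSemidef →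
      (X + γ2 • S).PosSemidef := by
    intro X S hXS hX
    have h : X + γ2 • S = (1-γ2) • X + γ2 • (X + S) := by module
    rw [h]
    exact (psd_real_smul hX (by linarith)).add (psd_real_smul hXS hγ2pos.le)
  have hminus : ∀ (X S : Matrix (Fin D) (Fin D) ℂ), (X - S).PosSemidef → X.PosSemidef →
      (X - γ2 • S).PosSemidef := by
    intro X S hXS hX
    have h : X - γ2 • S = (1-γ2) • X + γ2 • (X - S) := by module
    rw [h]
    exact (psd_real_smul hX (by linarith)).add (psd_real_smul hXS hγ2pos.le)
  have dec : ∀ (X S : Matrix (Fin D) (Fin D) ℂ),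
      X + γ1 • S = t • (X + γ2 • S) + (1-t) • X := by
    intro X S; rw [← htγ2]; module
  have decm : ∀ (X S : Matrix (Fin D) (Fin D) ℂ),
      X - γ1 • S = t • (X - γ2 • S) + (1-t) • X := by
    intro X S; rw [← htγ2]; module
  have i1 : t * qs (ρ + γ2 • σ) (ρ' + γ2 • σ') s + (1-t) * qs ρ ρ' s
      ≤ qs (ρ + γ1 • σ) (ρ' + γ1 • σ') s := by
    rw [dec ρ σ, dec ρ' σ']
    exact qs_concave (hplus ρ σ h1 hρ) (hplus ρ' σ' h3 hρ') hρ hρ' ht0 ht1 hs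
  have i2 : t * qs (ρ - γ2 • σ) (ρ' - γ2 • σ') s + (1-t) * qs ρ ρ' s
      ≤ qs (ρ - γ1 • σ) (ρ' - γ1 • σ') s := by
    rw [decm ρ σ, decm ρ' σ']
    exact qs_concave (hminus ρ σ h2 hρ) (hminus ρ' σ' h4 hρ') hρ hρ' ht0 ht1 hs
  rw [Fs, Fs]
  linarith
end
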